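/- arXiv:1612.04906 — 10 statements merged into one kernel-verified Lean document; each statement's English description precedes it below -/
import Mathlib

section
/- For any real number α and any positive integer N, the fractional parts {α}, {2α}, ..., {Nα} partition the circle ℝ/ℤ into intervals having at most three distinct lengths. -/
open Matrix Set

noncomputable section

/-- The lattice ℤ²M (row-vector convention). -/
def lat (M : Matrix.SpecialLinearGroup (Fin 2) ℝ) : Set (ℝ × ℝ) :=
  { p | ∃ m n : ℤ, p = ((m : ℝ) * M.1 0 0 + (n : ℝ) * M.1 1 0,
                        (m : ℝ) * M.1 0 1 + (n : ℝ) * M.1 1 1) }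

/-- The set { y > 0 : (x,y) ∈ ℤ²M, -t < x ≤ 1-t }. -/
def Fset (M : Matrix.SpecialLinearGroup (Fin 2) ℝ) (t : ℝ) : Set ℝ :=
  { y | 0 < y ∧ ∃ x : ℝ, (x, y) ∈ lat M ∧ -t < x ∧ x ≤ 1 - t }

/-- F(M,t) = min{ y > 0 : (x,y) ∈ ℤ²M, -t < x ≤ 1-t }. -/
noncomputable def F (M : Matrix.SpecialLinearGroup (Fin 2) ℝ) (t : ℝ) : ℝ :=
  sInf (Fset M t)

/-- The set of positive values (ℓ-k)α + n with 0 < ℓ ≤ N. -/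
def gapSet (α : ℝ) (N k : ℤ) : Set ℝ :=
  { v | 0 < v ∧ ∃ l n : ℤ, 0 < l ∧ l ≤ N ∧ v = ((l : ℝ) - (k : ℝ)) * α + (n : ℝ) }

/-- s_{k,N}: the gap from {kα} to its next neighbor among {α},...,{Nα}. -/
noncomputable def gap (α : ℝ) (N k : ℤ) : ℝ := sInf (gapSet α N k)

/-- The region A = (-1,1) × (0,∞). -/
def regA : Set (ℝ × ℝ) := Set.Ioo (-1 : ℝ) 1 ×ˢ Set.Ioi (0 : ℝ)

/-! ### Auxiliary machinery for the three gap theorem -/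

/-- The least positive element of `jα + ℤ`. -/
noncomputable def gg (α : ℝ) (j : ℤ) : ℝ :=
  if Int.fract ((j : ℝ) * α) = 0 then 1 else Int.fract ((j : ℝ) * α)

lemma gg_pos (α : ℝ) (j : ℤ) : 0 < gg α j := by
  unfold gg; split
  · norm_num
  · exact lt_of_le_of_ne (Int.fract_nonneg _) (Ne.symm ‹_›)

lemma gg_le_one (α : ℝ) (j : ℤ) : gg α j ≤ 1 := by
  unfold gg; split
  · exact le_rfl
  · exact (Int.fract_lt_one _).le

lemma gg_zero (α : ℝ) : gg α 0 = 1 := by simp [gg]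

lemma fract_addZ (α : ℝ) (i j : ℤ) :
    Int.fract (((i + j : ℤ) : ℝ) * α) =
      Int.fract (Int.fract ((i : ℝ) * α) + Int.fract ((j : ℝ) * α)) := by
  have h1 : ((i + j : ℤ) : ℝ) * α =
      (Int.fract ((i : ℝ) * α) + Int.fract ((j : ℝ) * α)) +
        ((⌊(i : ℝ) * α⌋ + ⌊(j : ℝ) * α⌋ : ℤ) : ℝ) := by
    unfold Int.fract; push_cast; ring
  rw [h1, Int.fract_add_intCast]

lemma gg_eq_fract {α : ℝ} {j : ℤ} (h : Int.fract ((j : ℝ) * α) ≠ 0) :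
    gg α j = Int.fract ((j : ℝ) * α) := if_neg h

lemma gg_fract_ne {α : ℝ} {j : ℤ} (h : gg α j < 1) :
    Int.fract ((j : ℝ) * α) ≠ 0 := by
  intro h0; rw [gg, if_pos h0] at h; exact lt_irrefl _ h

/-- Addition law. -/
lemma gg_add (α : ℝ) {i j : ℤ} (h : gg α i + gg α j ≤ 1) :
    gg α (i + j) = gg α i + gg α j := by
  have hi : gg α i < 1 := by have := gg_pos α j; linarith
  have hj : gg α j < 1 := by have := gg_pos α i; linarith
  have hi0 := gg_fract_ne hi
  have hj0 := gg_fract_ne hj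
  have hgi : gg α i = Int.fract ((i : ℝ) * α) := gg_eq_fract hi0
  have hgj : gg α j = Int.fract ((j : ℝ) * α) := gg_eq_fract hj0
  have key := fract_addZ α i j
  have hpi : 0 < Int.fract ((i : ℝ) * α) := by
    have := gg_pos α i; rw [hgi] at this; exact this
  have hpj : 0 < Int.fract ((j : ℝ) * α) := by
    have := gg_pos α j; rw [hgj] at this; exact this
  rcases lt_or_eq_of_le h with h1 | h1
  · have hlt1 : Int.fract ((i : ℝ) * α) + Int.fract ((j : ℝ) * α) < 1 := by
      rw [← hgi, ← hgj]; exact h1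
    have hfr : Int.fract (Int.fract ((i : ℝ) * α) + Int.fract ((j : ℝ) * α)) =
        Int.fract ((i : ℝ) * α) + Int.fract ((j : ℝ) * α) :=
      Int.fract_eq_self.mpr ⟨by linarith, hlt1⟩
    rw [hfr] at key
    rw [gg, key, if_neg (by intro hc; linarith), hgi, hgj]
  · -- sum equals 1
    have hsum : Int.fract ((i : ℝ) * α) + Int.fract ((j : ℝ) * α) = 1 := by
      rw [← hgi, ← hgj]; exact h1
    rw [hsum] at key
    have : Int.fract (((i + j : ℤ) : ℝ) * α) = 0 := by
      rw [key]; norm_num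
    rw [gg, if_pos this, ← h1]

/-- Subtraction law. -/
lemma gg_sub (α : ℝ) {i j : ℤ} (h : gg α i < gg α j) :
    gg α (j - i) = gg α j - gg α i := by
  have hi : gg α i < 1 := lt_of_lt_of_le h (gg_le_one α j)
  have hi0 := gg_fract_ne hi
  have hgi : gg α i = Int.fract ((i : ℝ) * α) := gg_eq_fract hi0
  have hni : Int.fract (((-i : ℤ) : ℝ) * α) = 1 - Int.fract ((i : ℝ) * α) := by
    have : ((-i : ℤ) : ℝ) * α = -((i : ℝ) * α) := by push_cast; ring
    rw [this, Int.fract_neg hi0]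
  have key : Int.fract (((j - i : ℤ) : ℝ) * α) =
      Int.fract (Int.fract ((j : ℝ) * α) + (1 - Int.fract ((i : ℝ) * α))) := by
    have := fract_addZ α j (-i)
    rw [hni] at this
    simpa [sub_eq_add_neg] using this
  have hfi_pos : 0 < Int.fract ((i : ℝ) * α) :=
    lt_of_le_of_ne (Int.fract_nonneg _) (Ne.symm hi0)
  have hfi_lt : Int.fract ((i : ℝ) * α) < 1 := Int.fract_lt_one _
  by_cases hj0 : Int.fract ((j : ℝ) * α) = 0
  · -- gg α j = 1
    have hgj : gg α j = 1 := by rw [gg, if_pos hj0]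
    rw [hj0, zero_add] at key
    have h01 : Int.fract (1 - Int.fract ((i : ℝ) * α)) =
        1 - Int.fract ((i : ℝ) * α) :=
      Int.fract_eq_self.mpr ⟨by linarith, by linarith⟩
    rw [h01] at key
    rw [gg, key, if_neg (by intro hc; linarith), hgj, hgi]
  · have hgj : gg α j = Int.fract ((j : ℝ) * α) := gg_eq_fract hj0
    have hlt : Int.fract ((i : ℝ) * α) < Int.fract ((j : ℝ) * α) := by
      rw [← hgi, ← hgj]; exact h
    have harr : Int.fract ((j : ℝ) * α) + (1 - Int.fract ((i : ℝ) * α)) =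
        (Int.fract ((j : ℝ) * α) - Int.fract ((i : ℝ) * α)) + ((1 : ℤ) : ℝ) := by
      push_cast; ring
    rw [harr, Int.fract_add_intCast] at key
    have hfr : Int.fract (Int.fract ((j : ℝ) * α) - Int.fract ((i : ℝ) * α)) =
        Int.fract ((j : ℝ) * α) - Int.fract ((i : ℝ) * α) := by
      refine Int.fract_eq_self.mpr ⟨by linarith, ?_⟩
      have := Int.fract_lt_one ((j : ℝ) * α); linarith
    rw [hfr] at key
    rw [gg, key, if_neg (by rw [← hgi, ← hgj]; intro h0; linarith), hgi, hgj]

lemma gg_neg (α : ℝ) {j : ℤ} (h : Int.fract ((j : ℝ) * α) ≠ 0) :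
    gg α (-j) = 1 - gg α j := by
  have hnj : ((-j : ℤ) : ℝ) * α = -((j : ℝ) * α) := by push_cast; ring
  have hfr : Int.fract (((-j : ℤ) : ℝ) * α) = 1 - Int.fract ((j : ℝ) * α) := by
    rw [hnj, Int.fract_neg h]
  have hlt : Int.fract ((j : ℝ) * α) < 1 := Int.fract_lt_one _
  have h0 : 0 < Int.fract ((j : ℝ) * α) :=
    lt_of_le_of_ne (Int.fract_nonneg _) (Ne.symm h)
  rw [gg, hfr, if_neg (by intro h0'; linarith), gg_eq_fract h]

/-- `gg α j` is a lower bound for positive elements of `jα + ℤ`. -/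
lemma gg_lb (α : ℝ) (j n : ℤ) (hv : 0 < (j : ℝ) * α + (n : ℝ)) :
    gg α j ≤ (j : ℝ) * α + (n : ℝ) := by
  set x := (j : ℝ) * α with hx
  have hdec : x + (n : ℝ) = Int.fract x + ((⌊x⌋ + n : ℤ) : ℝ) := by
    unfold Int.fract; push_cast; ring
  by_cases h0 : Int.fract x = 0
  · rw [gg, if_pos h0]
    rw [hdec, h0, zero_add] at hv ⊢
    have h1 : (0 : ℤ) < ⌊x⌋ + n := by exact_mod_cast hv
    have h2 : (1 : ℤ) ≤ ⌊x⌋ + n := h1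
    exact_mod_cast h2
  · rw [gg, if_neg h0]
    have hpos : 0 < Int.fract x :=
      lt_of_le_of_ne (Int.fract_nonneg _) (Ne.symm h0)
    have hm : (0 : ℤ) ≤ ⌊x⌋ + n := by
      by_contra hneg
      push_neg at hneg
      have hneg' : ⌊x⌋ + n ≤ -1 := by omega
      have : ((⌊x⌋ + n : ℤ) : ℝ) ≤ ((-1 : ℤ) : ℝ) := by exact_mod_cast hneg'
      rw [Int.cast_neg, Int.cast_one] at this
      have := Int.fract_lt_one x
      rw [hdec] at hv; linarith
    have : (0 : ℝ) ≤ ((⌊x⌋ + n : ℤ) : ℝ) := by exact_mod_cast hm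
    rw [hdec]; linarith

/-- `gg α j` is attained in `jα + ℤ`. -/
lemma gg_mem (α : ℝ) (j : ℤ) : ∃ n : ℤ, gg α j = (j : ℝ) * α + (n : ℝ) := by
  by_cases h0 : Int.fract ((j : ℝ) * α) = 0
  · refine ⟨1 - ⌊(j : ℝ) * α⌋, ?_⟩
    rw [gg, if_pos h0]
    unfold Int.fract at h0
    push_cast
    linarith
  · exact ⟨-⌊(j : ℝ) * α⌋, by rw [gg, if_neg h0]; unfold Int.fract; push_cast; ring⟩

/-- The gap equals the minimum of `gg` over the integer window. -/
lemma gap_eq_inf' (α : ℝ) (N k : ℤ) (hN : 0 < N)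
    (hne : (Finset.Icc (1 - k) (N - k)).Nonempty) :
    gap α N k = (Finset.Icc (1 - k) (N - k)).inf' hne (gg α) := by
  refine (IsLeast.csInf_eq ?_)
  constructor
  · obtain ⟨j, hj, hjeq⟩ := Finset.exists_mem_eq_inf' hne (gg α)
    rw [Finset.mem_Icc] at hj
    obtain ⟨n, hn⟩ := gg_mem α j
    refine ⟨by rw [hjeq]; exact gg_pos α j, j + k, n, by omega, by omega, ?_⟩
    rw [hjeq, hn]; push_cast; ring
  · rintro v ⟨hv, l, n, hl, hlN, rfl⟩
    have hform : ((l : ℝ) - (k : ℝ)) * α + (n : ℝ) = ((l - k : ℤ) : ℝ) * α + (n : ℝ) := by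
      push_cast; ring
    rw [hform] at hv ⊢
    refine le_trans (Finset.inf'_le _ (by rw [Finset.mem_Icc]; omega)) (gg_lb α (l - k) n hv)

/-- Three gap theorem: the gaps of {α},...,{Nα} on ℝ/ℤ take at most three
distinct lengths. -/
theorem three_gap (α : ℝ) (N : ℤ) (hN : 0 < N) :
    {s : ℝ | ∃ k : ℤ, 1 ≤ k ∧ k ≤ N ∧ s = gap α N k}.ncard ≤ 3 := by
  by_cases hN1 : N = 1
  · subst hN1
    have hset : {s : ℝ | ∃ k : ℤ, 1 ≤ k ∧ k ≤ 1 ∧ s = gap α 1 k} = {gap α 1 1} := by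
      ext s
      simp only [Set.mem_setOf_eq, Set.mem_singleton_iff]
      constructor
      · rintro ⟨k, h1, h2, rfl⟩
        have hk : k = 1 := by omega
        rw [hk]
      · rintro rfl
        exact ⟨1, le_refl _, le_refl _, rfl⟩
    rw [hset, Set.ncard_singleton]
    omega
  · have hN2 : 2 ≤ N := by omega
    set S := Finset.Icc (1 : ℤ) (N - 1) with hS
    have hSne : S.Nonempty := Finset.nonempty_Icc.mpr (by omega)
    have hmemS : ∀ j : ℤ, j ∈ S ↔ 1 ≤ j ∧ j ≤ N - 1 := fun j => by
      rw [hS, Finset.mem_Icc]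
    set P := S.inf' hSne (gg α) with hP
    set Q := S.inf' hSne (fun j => gg α (-j)) with hQ
    have hPle : ∀ j ∈ S, P ≤ gg α j := fun j hj => Finset.inf'_le _ hj
    have hQle : ∀ j ∈ S, Q ≤ gg α (-j) := fun j hj =>
      Finset.inf'_le (fun j => gg α (-j)) hj
    obtain ⟨p0, hp0S, hp0⟩ := Finset.exists_mem_eq_inf' hSne (gg α)
    obtain ⟨q0, hq0S, hq0⟩ := Finset.exists_mem_eq_inf' hSne (fun j => gg α (-j))
    set TP := S.filter (fun j => gg α j = P) with hTP
    have hTPne : TP.Nonempty := ⟨p0, Finset.mem_filter.mpr ⟨hp0S, hp0.symm⟩⟩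
    set p := TP.min' hTPne with hpdef
    have hpTP : p ∈ TP := Finset.min'_mem _ _
    have hpS : p ∈ S := (Finset.mem_filter.mp hpTP).1
    have hgp : gg α p = P := (Finset.mem_filter.mp hpTP).2
    have hpmin : ∀ j ∈ S, gg α j = P → p ≤ j := fun j hj hgj =>
      Finset.min'_le _ _ (Finset.mem_filter.mpr ⟨hj, hgj⟩)
    set TQ := S.filter (fun j => gg α (-j) = Q) with hTQ
    have hTQne : TQ.Nonempty := ⟨q0, Finset.mem_filter.mpr ⟨hq0S, hq0.symm⟩⟩
    set q := TQ.min' hTQne with hqdef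
    have hqTQ : q ∈ TQ := Finset.min'_mem _ _
    have hqS : q ∈ S := (Finset.mem_filter.mp hqTQ).1
    have hgq' : gg α (-q) = Q := (Finset.mem_filter.mp hqTQ).2
    have hqmin : ∀ j ∈ S, gg α (-j) = Q → q ≤ j := fun j hj hgj =>
      Finset.min'_le _ _ (Finset.mem_filter.mpr ⟨hj, hgj⟩)
    have hPlt : ∀ j ∈ S, j < p → P < gg α j := by
      intro j hj hlt
      rcases lt_or_eq_of_le (hPle j hj) with h | h
      · exact h
      · exact absurd (hpmin j hj h.symm) (by omega)
    have hQlt : ∀ j ∈ S, j < q → Q < gg α (-j) := by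
      intro j hj hlt
      rcases lt_or_eq_of_le (hQle j hj) with h | h
      · exact h
      · exact absurd (hqmin j hj h.symm) (by omega)
    have hpb2 : 1 ≤ p ∧ p ≤ N - 1 := (hmemS p).mp hpS
    have hqb2 : 1 ≤ q ∧ q ≤ N - 1 := (hmemS q).mp hqS
    have hone : (1 : ℤ) ∈ S := (hmemS 1).mpr ⟨le_refl _, by omega⟩
    have hP1 : P ≤ 1 := le_trans (hPle 1 hone) (gg_le_one α 1)
    have hQ1 : Q ≤ 1 := le_trans (hQle 1 hone) (gg_le_one α (-1))
    have hPpos : 0 < P := by rw [← hgp]; exact gg_pos α p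
    have hQpos : 0 < Q := by rw [← hgq']; exact gg_pos α (-q)
    have hsub : {s : ℝ | ∃ k : ℤ, 1 ≤ k ∧ k ≤ N ∧ s = gap α N k} ⊆
        ({P, Q, P + Q} : Set ℝ) := by
      rintro s ⟨k, hk1, hkN, rfl⟩
      have hWne : (Finset.Icc (1 - k) (N - k)).Nonempty :=
        Finset.nonempty_Icc.mpr (by omega)
      rw [gap_eq_inf' α N k hN hWne]
      have hmemW : ∀ j : ℤ, j ∈ Finset.Icc (1 - k) (N - k) ↔
          1 - k ≤ j ∧ j ≤ N - k := fun j => Finset.mem_Icc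
      simp only [Set.mem_insert_iff, Set.mem_singleton_iff]
      by_cases hpb : p ≤ N - k
      · by_cases hqa : q ≤ k - 1
        · -- both p and -q in window : min of P and Q
          have hmeq : (Finset.Icc (1 - k) (N - k)).inf' hWne (gg α) = min P Q := by
            apply le_antisymm
            · apply le_min
              · exact le_trans (Finset.inf'_le _ ((hmemW p).mpr ⟨by omega, hpb⟩))
                  (le_of_eq hgp)
              · exact le_trans (Finset.inf'_le _ ((hmemW (-q)).mpr ⟨by omega, by omega⟩))
                  (le_of_eq hgq')
            · apply Finset.le_inf'
              intro j hj
              rw [hmemW] at hj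
              rcases lt_trichotomy j 0 with h | h | h
              · have hm : -j ∈ S := (hmemS (-j)).mpr ⟨by omega, by omega⟩
                have := hQle (-j) hm
                rw [neg_neg] at this
                exact le_trans (min_le_right _ _) this
              · rw [h, gg_zero]; exact le_trans (min_le_left _ _) hP1
              · exact le_trans (min_le_left _ _)
                  (hPle j ((hmemS j).mpr ⟨by omega, by omega⟩))
          rw [hmeq]
          rcases le_total P Q with h | h
          · rw [min_eq_left h]; exact Or.inl rfl
          · rw [min_eq_right h]; exact Or.inr (Or.inl rfl)
        · -- only p in window : gap P
          push_neg at hqa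
          have hnegP : ∀ i : ℤ, 1 ≤ i → i ≤ k - 1 → P ≤ gg α (-i) := by
            intro i h1 h2
            by_contra hlt
            push_neg at hlt
            have hiS : i ∈ S := (hmemS i).mpr ⟨h1, by omega⟩
            have hQlt' : Q < gg α (-i) := hQlt i hiS (by omega)
            have hsubst := gg_sub α (i := -q) (j := -i) (by rw [hgq']; exact hQlt')
            have harith : (-i : ℤ) - -q = q - i := by ring
            rw [harith, hgq'] at hsubst
            have hqiS : q - i ∈ S := (hmemS _).mpr ⟨by omega, by omega⟩
            have hge := hPle _ hqiS
            rw [hsubst] at hge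
            linarith
          have hmeq : (Finset.Icc (1 - k) (N - k)).inf' hWne (gg α) = P := by
            apply le_antisymm
            · exact le_trans (Finset.inf'_le _ ((hmemW p).mpr ⟨by omega, hpb⟩))
                (le_of_eq hgp)
            · apply Finset.le_inf'
              intro j hj
              rw [hmemW] at hj
              rcases lt_trichotomy j 0 with h | h | h
              · have := hnegP (-j) (by omega) (by omega)
                rwa [neg_neg] at this
              · rw [h, gg_zero]; exact hP1
              · exact hPle j ((hmemS j).mpr ⟨by omega, by omega⟩)
          rw [hmeq]; exact Or.inl rfl
      · push_neg at hpb
        by_cases hqa : q ≤ k - 1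
        · -- only -q in window : gap Q
          have hposQ : ∀ j : ℤ, 1 ≤ j → j ≤ N - k → Q ≤ gg α j := by
            intro j h1 h2
            by_contra hlt
            push_neg at hlt
            have hjS : j ∈ S := (hmemS j).mpr ⟨h1, by omega⟩
            have hPlt' : P < gg α j := hPlt j hjS (by omega)
            have hsubst := gg_sub α (i := p) (j := j) (by rw [hgp]; exact hPlt')
            have harith : j - p = -(p - j) := by ring
            rw [harith] at hsubst
            have hpjS : p - j ∈ S := (hmemS _).mpr ⟨by omega, by omega⟩
            have hge := hQle _ hpjS
            rw [hsubst, hgp] at hge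
            linarith
          have hmeq : (Finset.Icc (1 - k) (N - k)).inf' hWne (gg α) = Q := by
            apply le_antisymm
            · exact le_trans (Finset.inf'_le _ ((hmemW (-q)).mpr ⟨by omega, by omega⟩))
                (le_of_eq hgq')
            · apply Finset.le_inf'
              intro j hj
              rw [hmemW] at hj
              rcases lt_trichotomy j 0 with h | h | h
              · have hm : -j ∈ S := (hmemS (-j)).mpr ⟨by omega, by omega⟩
                have := hQle (-j) hm
                rwa [neg_neg] at this
              · rw [h, gg_zero]; exact hQ1
              · exact hposQ j (by omega) (by omega)
          rw [hmeq]; exact Or.inr (Or.inl rfl)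
        · -- neither : gap P + Q
          push_neg at hqa
          have hPQ : P + Q ≤ 1 := by
            by_cases hfp : Int.fract ((p : ℝ) * α) = 0
            · exfalso
              have hgp1 : gg α p = 1 := by rw [gg, if_pos hfp]
              have hP1' : P = 1 := by rw [← hgp, hgp1]
              have hg1 : gg α 1 = P :=
                le_antisymm (by rw [hP1']; exact gg_le_one α 1) (hPle 1 hone)
              have hple1 := hpmin 1 hone hg1
              omega
            · have hneg := gg_neg α hfp
              have hple := hQle p hpS
              rw [hneg, hgp] at hple
              linarith
          have hwit : p - q ∈ Finset.Icc (1 - k) (N - k) :=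
            (hmemW _).mpr ⟨by omega, by omega⟩
          have hgpq : gg α (p - q) = P + Q := by
            have hadd := gg_add α (i := p) (j := -q) (by rw [hgp, hgq']; exact hPQ)
            have harith : p + -q = p - q := by ring
            rw [harith, hgp, hgq'] at hadd
            exact hadd
          have hmeq : (Finset.Icc (1 - k) (N - k)).inf' hWne (gg α) = P + Q := by
            apply le_antisymm
            · exact le_trans (Finset.inf'_le _ hwit) (le_of_eq hgpq)
            · apply Finset.le_inf'
              intro j hj
              rw [hmemW] at hj
              rcases lt_trichotomy j 0 with h | h | h
              · by_contra hlt
                push_neg at hlt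
                have hiS : -j ∈ S := (hmemS _).mpr ⟨by omega, by omega⟩
                have hQlt' : Q < gg α j := by
                  have := hQlt (-j) hiS (by omega)
                  rwa [neg_neg] at this
                have hsubst := gg_sub α (i := -q) (j := j) (by rw [hgq']; exact hQlt')
                have harith : j - -q = q + j := by ring
                rw [harith, hgq'] at hsubst
                have hS' : q + j ∈ S := (hmemS _).mpr ⟨by omega, by omega⟩
                have hge := hPle _ hS'
                rw [hsubst] at hge
                linarith
              · rw [h, gg_zero]; exact hPQ
              · by_contra hlt
                push_neg at hlt
                have hjS : j ∈ S := (hmemS _).mpr ⟨by omega, by omega⟩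
                have hPlt' : P < gg α j := hPlt j hjS (by omega)
                have hsubst := gg_sub α (i := p) (j := j) (by rw [hgp]; exact hPlt')
                have harith : j - p = -(p - j) := by ring
                rw [harith] at hsubst
                have hS' : p - j ∈ S := (hmemS _).mpr ⟨by omega, by omega⟩
                have hge := hQle _ hS'
                rw [hsubst, hgp] at hge
                linarith
          rw [hmeq]; exact Or.inr (Or.inr rfl)
    have hfin : ({P, Q, P + Q} : Set ℝ).Finite :=
      ((Set.finite_singleton _).insert _).insert _
    have hle := Set.ncard_le_ncard hsub hfin
    have h1 := Set.ncard_insert_le Q ({P + Q} : Set ℝ)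
    have h2 := Set.ncard_insert_le P ({Q, P + Q} : Set ℝ)
    rw [Set.ncard_singleton] at h1
    omega
end
end

section
/- Let M ∈ SL(2,ℝ) and t ∈ (0,1]. Then the set { y > 0 : (x,y) ∈ ℤ²M, -t < x ≤ 1 - t } is nonempty, where ℤ²M = { (m,n)M : (m,n) ∈ ℤ² } with row-vector convention. -/
open Matrix Set

noncomputable section

private lemma key_lemma (a b c d : ℝ) (hdet : a * d - b * c = 1) (t : ℝ)
    (ht : 0 < t) (ht1 : t ≤ 1) :
    ∃ m n : ℤ, 0 < (m : ℝ) * b + (n : ℝ) * d ∧ -t < (m : ℝ) * a + (n : ℝ) * c ∧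
      (m : ℝ) * a + (n : ℝ) * c ≤ 1 - t := by
  -- there is a lattice point with positive y
  have hy_exists : ∃ m n : ℤ, 0 < (m : ℝ) * b + (n : ℝ) * d := by
    rcases lt_trichotomy b 0 with hb | hb | hb
    · exact ⟨-1, 0, by push_cast; linarith⟩
    · rcases lt_trichotomy d 0 with hd | hd | hd
      · exact ⟨0, -1, by push_cast; linarith⟩
      · exfalso; rw [hb, hd] at hdet; nlinarith
      · exact ⟨0, 1, by push_cast; linarith⟩
    · exact ⟨1, 0, by push_cast; linarith⟩
  -- translation trick: a horizontal lattice vector of length in (0,1) finishes the proof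
  have htrans : ∀ p q : ℤ, 0 < (p : ℝ) * a + (q : ℝ) * c → (p : ℝ) * a + (q : ℝ) * c < 1 →
      (p : ℝ) * b + (q : ℝ) * d = 0 →
      ∃ m n : ℤ, 0 < (m : ℝ) * b + (n : ℝ) * d ∧ -t < (m : ℝ) * a + (n : ℝ) * c ∧
        (m : ℝ) * a + (n : ℝ) * c ≤ 1 - t := by
    intro p q hx0 hx1 hy0
    obtain ⟨m0, n0, hy⟩ := hy_exists
    set ξ : ℝ := (p : ℝ) * a + (q : ℝ) * c with hξ
    set x0 : ℝ := (m0 : ℝ) * a + (n0 : ℝ) * c with hx0def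
    set k : ℤ := ⌊(1 - t - x0) / ξ⌋ with hk
    have h1 : (k : ℝ) * ξ ≤ 1 - t - x0 := (le_div_iff₀ hx0).1 (Int.floor_le _)
    have h2 : 1 - t - x0 < ((k : ℝ) + 1) * ξ := (div_lt_iff₀ hx0).1 (Int.lt_floor_add_one _)
    refine ⟨m0 + k * p, n0 + k * q, ?_, ?_, ?_⟩
    · push_cast
      have e : ((m0 : ℝ) + k * p) * b + ((n0 : ℝ) + k * q) * d
          = ((m0 : ℝ) * b + n0 * d) + k * ((p : ℝ) * b + q * d) := by ring
      rw [e, hy0, mul_zero, add_zero]; exact hy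
    · push_cast
      have e : ((m0 : ℝ) + k * p) * a + ((n0 : ℝ) + k * q) * c = x0 + k * ξ := by
        rw [hξ, hx0def]; ring
      rw [e]; nlinarith
    · push_cast
      have e : ((m0 : ℝ) + k * p) * a + ((n0 : ℝ) + k * q) * c = x0 + k * ξ := by
        rw [hξ, hx0def]; ring
      rw [e]; linarith
  by_cases hker : ∃ m n : ℤ, ¬(m = 0 ∧ n = 0) ∧ (m : ℝ) * a + (n : ℝ) * c = 0
  · -- a nonzero lattice vector on the y-axis
    obtain ⟨m, n, hmn, hx⟩ := hker
    have hη : (m : ℝ) * b + (n : ℝ) * d ≠ 0 := by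
      intro h
      apply hmn
      constructor
      · have hm : (m : ℝ) = 0 := by linear_combination d * hx - c * h - (m : ℝ) * hdet
        exact_mod_cast hm
      · have hn : (n : ℝ) = 0 := by linear_combination a * h - b * hx - (n : ℝ) * hdet
        exact_mod_cast hn
    rcases hη.lt_or_gt with hη | hη
    · exact ⟨-m, -n, by push_cast; linarith, by push_cast; linarith, by push_cast; linarith⟩
    · exact ⟨m, n, by linarith, by linarith, by linarith⟩
  · have hinj : ∀ m n : ℤ, (m : ℝ) * a + (n : ℝ) * c = 0 → m = 0 ∧ n = 0 := by
      intro m n h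
      by_contra hc
      exact hker ⟨m, n, hc, h⟩
    set S : AddSubgroup ℝ := AddSubgroup.closure {a, c} with hS
    have hSmem : ∀ x ∈ S, ∃ m n : ℤ, (m : ℝ) * a + (n : ℝ) * c = x := by
      intro x hx
      rw [hS, AddSubgroup.mem_closure_pair] at hx
      obtain ⟨m, n, h⟩ := hx
      exact ⟨m, n, by rw [← h]; simp [zsmul_eq_mul]⟩
    have hdense : Dense (S : Set ℝ) := by
      rcases AddSubgroup.dense_or_cyclic S with h | ⟨g, hg⟩
      · exact h
      · exfalso
        have haS : a ∈ S := AddSubgroup.subset_closure (by simp)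
        have hcS : c ∈ S := AddSubgroup.subset_closure (by simp)
        rw [hg, AddSubgroup.mem_closure_singleton] at haS hcS
        obtain ⟨z, hz⟩ := haS
        obtain ⟨w, hw⟩ := hcS
        have h0 : (w : ℝ) * a + (-z : ℤ) * c = 0 := by
          push_cast
          rw [← hz, ← hw]
          push_cast [zsmul_eq_mul]
          ring
        obtain ⟨hw0, hz0⟩ := hinj w (-z) h0
        have hz0' : z = 0 := by omega
        have ha0 : a = 0 := by rw [← hz, hz0']; simp
        have hc0 : c = 0 := by rw [← hw, hw0]; simp
        have := hinj 1 0 (by rw [ha0, hc0]; ring)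
        simp at this
    rcases eq_or_lt_of_le ht1 with rfl | htlt
    · -- t = 1
      obtain ⟨ξs, hξsS, hξs0, hξs1⟩ := hdense.exists_between (show (0:ℝ) < 1 by norm_num)
      obtain ⟨m₁, n₁, heq₁⟩ := hSmem ξs hξsS
      set C : ℝ := (m₁ : ℝ) * b + (n₁ : ℝ) * d with hCdef
      rcases lt_trichotomy C 0 with hC | hC | hC
      · exact ⟨-m₁, -n₁, by push_cast; linarith, by push_cast; linarith, by push_cast; linarith⟩
      · exact htrans m₁ n₁ (by rw [heq₁]; exact hξs0) (by rw [heq₁]; exact hξs1) hC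
      · by_contra hbad
        have hpos : ∀ p q : ℤ, 0 < (p : ℝ) * a + (q : ℝ) * c → (p : ℝ) * a + (q : ℝ) * c < 1 →
            0 ≤ (p : ℝ) * b + (q : ℝ) * d := by
          intro p q h0 h1
          by_contra hneg
          push_neg at hneg
          exact hbad ⟨-p, -q, by push_cast; linarith, by push_cast; linarith,
            by push_cast; linarith⟩
        obtain ⟨k, hk1, hkbig⟩ : ∃ k : ℤ, 1 ≤ k ∧ |b| + |d| + C * (|a| + |c|) < (k : ℝ) := by
          refine ⟨⌈|b| + |d| + C * (|a| + |c|)⌉ + 1, ?_, ?_⟩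
          · have : (0:ℤ) ≤ ⌈|b| + |d| + C * (|a| + |c|)⌉ := Int.ceil_nonneg (by positivity)
            omega
          · push_cast
            linarith [Int.le_ceil (|b| + |d| + C * (|a| + |c|))]
        have hkR1 : (1:ℝ) ≤ (k : ℝ) := by exact_mod_cast hk1
        have hkR : (0:ℝ) < (k : ℝ) := by linarith
        obtain ⟨ξ0, hξ0S, h00, h0k⟩ := hdense.exists_between (div_pos hξs0 hkR)
        obtain ⟨m0, n0, heq0⟩ := hSmem ξ0 hξ0S
        set η : ℝ := (m0 : ℝ) * b + (n0 : ℝ) * d with hηdef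
        have hkξ : (k : ℝ) * ξ0 < ξs := by
          have := (lt_div_iff₀ hkR).1 h0k
          linarith
        have hξ01 : ξ0 < 1 := by nlinarith
        have hη0 : 0 ≤ η := hpos m0 n0 (by rw [heq0]; exact h00) (by rw [heq0]; exact hξ01)
        rcases eq_or_lt_of_le hη0 with hη | hη
        · exact hbad (htrans m0 n0 (by rw [heq0]; exact h00) (by rw [heq0]; exact hξ01) hη.symm)
        · -- η > 0 : derive a contradiction via the pigeonhole bound
          have hCb : (k : ℝ) * η ≤ C := by
            have hx' : ((m₁ - k * m0 : ℤ) : ℝ) * a + ((n₁ - k * n0 : ℤ) : ℝ) * c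
                = ξs - (k : ℝ) * ξ0 := by
              push_cast
              linear_combination heq₁ - (k : ℝ) * heq0
            have h0' : 0 < ((m₁ - k * m0 : ℤ) : ℝ) * a + ((n₁ - k * n0 : ℤ) : ℝ) * c := by
              rw [hx']; linarith
            have h1' : ((m₁ - k * m0 : ℤ) : ℝ) * a + ((n₁ - k * n0 : ℤ) : ℝ) * c < 1 := by
              rw [hx']; nlinarith
            have := hpos _ _ h0' h1'
            have hy' : ((m₁ - k * m0 : ℤ) : ℝ) * b + ((n₁ - k * n0 : ℤ) : ℝ) * d
                = C - (k : ℝ) * η := by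
              push_cast
              rw [hCdef, hηdef]; ring
            rw [hy'] at this
            linarith
          have hm0 : (m0 : ℝ) = ξ0 * d - η * c := by
            linear_combination d * heq0 - c * hηdef.symm - (m0 : ℝ) * hdet
          have hn0 : (n0 : ℝ) = η * a - ξ0 * b := by
            linear_combination a * hηdef.symm - b * heq0 - (n0 : ℝ) * hdet
          have habs_m : (k : ℝ) * |(m0 : ℝ)| ≤ (k * ξ0) * |d| + (k * η) * |c| := by
            have e1 : (k : ℝ) * |(m0 : ℝ)| = |(k : ℝ) * (m0 : ℝ)| := by
              rw [abs_mul, abs_of_pos hkR]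
            have e2 : (k : ℝ) * (m0 : ℝ) = (k * ξ0) * d - (k * η) * c := by
              rw [hm0]; ring
            rw [e1, e2]
            calc |(k * ξ0) * d - (k * η) * c| ≤ |(k * ξ0) * d| + |(k * η) * c| := abs_sub _ _
              _ = (k * ξ0) * |d| + (k * η) * |c| := by
                  rw [abs_mul ((k:ℝ)*ξ0) d, abs_mul ((k:ℝ)*η) c, abs_of_pos (mul_pos hkR h00), abs_of_pos (mul_pos hkR hη)]
          have habs_n : (k : ℝ) * |(n0 : ℝ)| ≤ (k * η) * |a| + (k * ξ0) * |b| := by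
            have e1 : (k : ℝ) * |(n0 : ℝ)| = |(k : ℝ) * (n0 : ℝ)| := by
              rw [abs_mul, abs_of_pos hkR]
            have e2 : (k : ℝ) * (n0 : ℝ) = (k * η) * a - (k * ξ0) * b := by
              rw [hn0]; ring
            rw [e1, e2]
            calc |(k * η) * a - (k * ξ0) * b| ≤ |(k * η) * a| + |(k * ξ0) * b| := abs_sub _ _
              _ = (k * η) * |a| + (k * ξ0) * |b| := by
                  rw [abs_mul ((k:ℝ)*η) a, abs_mul ((k:ℝ)*ξ0) b, abs_of_pos (mul_pos hkR hη), abs_of_pos (mul_pos hkR h00)]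
          have hm0z : m0 = 0 := by
            by_contra h
            have h1 : (1:ℤ) ≤ |m0| := by
              have := abs_pos.mpr h
              omega
            have h1R : (1:ℝ) ≤ |(m0 : ℝ)| := by
              have : ((1:ℤ):ℝ) ≤ ((|m0| : ℤ) : ℝ) := by exact_mod_cast h1
              rwa [Int.cast_abs, Int.cast_one] at this
            have hchain : (k : ℝ) ≤ (k : ℝ) * |(m0 : ℝ)| :=
              le_mul_of_one_le_right (le_of_lt hkR) h1R
            have hb1 : ((k:ℝ) * ξ0) * |d| ≤ |d| := by
              have e1 := mul_le_mul_of_nonneg_right hkξ.le (abs_nonneg d)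
              have e2 := mul_le_mul_of_nonneg_right hξs1.le (abs_nonneg d)
              linarith
            have hb2 : ((k:ℝ) * η) * |c| ≤ C * |c| := mul_le_mul_of_nonneg_right hCb (abs_nonneg c)
            linarith [mul_nonneg hC.le (abs_nonneg a), abs_nonneg b]
          have hn0z : n0 = 0 := by
            by_contra h
            have h1 : (1:ℤ) ≤ |n0| := by
              have := abs_pos.mpr h
              omega
            have h1R : (1:ℝ) ≤ |(n0 : ℝ)| := by
              have : ((1:ℤ):ℝ) ≤ ((|n0| : ℤ) : ℝ) := by exact_mod_cast h1
              rwa [Int.cast_abs, Int.cast_one] at this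
            have hchain : (k : ℝ) ≤ (k : ℝ) * |(n0 : ℝ)| :=
              le_mul_of_one_le_right (le_of_lt hkR) h1R
            have hb1 : ((k:ℝ) * ξ0) * |b| ≤ |b| := by
              have e1 := mul_le_mul_of_nonneg_right hkξ.le (abs_nonneg b)
              have e2 := mul_le_mul_of_nonneg_right hξs1.le (abs_nonneg b)
              linarith
            have hb2 : ((k:ℝ) * η) * |a| ≤ C * |a| := mul_le_mul_of_nonneg_right hCb (abs_nonneg a)
            linarith [mul_nonneg hC.le (abs_nonneg c), abs_nonneg d]
          have hξ0z : ξ0 = 0 := by rw [← heq0, hm0z, hn0z]; norm_num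
          linarith
    · -- t < 1
      have hu : (0:ℝ) < min t (1 - t) := lt_min ht (by linarith)
      obtain ⟨ξ, hξS, hξ0, hξu⟩ := hdense.exists_between hu
      obtain ⟨m, n, heq⟩ := hSmem ξ hξS
      have hut : min t (1 - t) ≤ t := min_le_left _ _
      have hut' : min t (1 - t) ≤ 1 - t := min_le_right _ _
      rcases lt_trichotomy ((m : ℝ) * b + (n : ℝ) * d) 0 with hη | hη | hη
      · exact ⟨-m, -n, by push_cast; linarith, by push_cast; linarith, by push_cast; linarith⟩
      · exact htrans m n (by rw [heq]; exact hξ0) (by rw [heq]; linarith) hη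
      · exact ⟨m, n, hη, by linarith, by linarith⟩

/-- The set { y > 0 : (x,y) ∈ ℤ²M, -t < x ≤ 1-t } is nonempty. -/
theorem Fset_nonempty (M : Matrix.SpecialLinearGroup (Fin 2) ℝ) (t : ℝ)
    (ht : 0 < t) (ht1 : t ≤ 1) : (Fset M t).Nonempty := by
  have hdet : M.1 0 0 * M.1 1 1 - M.1 0 1 * M.1 1 0 = 1 := by
    have h := M.2
    rw [Matrix.det_fin_two] at h
    exact h
  obtain ⟨m, n, h1, h2, h3⟩ :=
    key_lemma (M.1 0 0) (M.1 0 1) (M.1 1 0) (M.1 1 1) hdet t ht ht1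
  exact ⟨(m : ℝ) * M.1 0 1 + (n : ℝ) * M.1 1 1, h1,
    (m : ℝ) * M.1 0 0 + (n : ℝ) * M.1 1 0, ⟨m, n, rfl⟩, h2, h3⟩
end
end

section
/- Let L be a lattice in ℝ² of covolume 1, let A = (-1,1) × (0,∞), and suppose r = (r₁,r₂) ∈ A ∩ L has minimal second coordinate among points of A ∩ L, and s = (s₁,s₂) ∈ A ∩ L \ ℤr has minimal second coordinate among points of A ∩ L not on the line ℝr, with s₂ > r₂. Then the closed parallelogram with vertices 0, r, s, r+s contains no lattice points of L other than its vertices, and consequently {r, s} is a basis of L. -/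
open Matrix Set

noncomputable section

lemma lat_combo (M : Matrix.SpecialLinearGroup (Fin 2) ℝ) {p q : ℝ × ℝ}
    (hp : p ∈ lat M) (hq : q ∈ lat M) (k l : ℤ) {x : ℝ × ℝ}
    (hx : x = ((k:ℝ)*p.1 + (l:ℝ)*q.1, (k:ℝ)*p.2 + (l:ℝ)*q.2)) : x ∈ lat M := by
  obtain ⟨m, n, hp⟩ := hp
  obtain ⟨m', n', hq⟩ := hq
  refine ⟨k*m + l*m', k*n + l*n', ?_⟩
  subst hx hp hq
  simp only [Prod.mk.injEq]
  constructor <;> push_cast <;> ring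

lemma mem_regA {x : ℝ × ℝ} (h1 : -1 < x.1) (h2 : x.1 < 1) (h3 : 0 < x.2) : x ∈ regA :=
  ⟨⟨h1, h2⟩, h3⟩

lemma regA_fst1 {x : ℝ × ℝ} (h : x ∈ regA) : -1 < x.1 := h.1.1
lemma regA_fst2 {x : ℝ × ℝ} (h : x ∈ regA) : x.1 < 1 := h.1.2
lemma regA_snd {x : ℝ × ℝ} (h : x ∈ regA) : 0 < x.2 := h.2

lemma D_ne (M : Matrix.SpecialLinearGroup (Fin 2) ℝ) (r s : ℝ × ℝ)
    (hr : r ∈ regA ∩ lat M)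
    (hrmin : ∀ p ∈ regA ∩ lat M, r.2 ≤ p.2)
    (hs : s ∈ regA ∩ lat M)
    (hsr : ∀ k : ℤ, s ≠ k • r)
    (hlt : r.2 < s.2) : r.1 * s.2 - r.2 * s.1 ≠ 0 := by
  intro hD
  have hr1 := regA_fst1 hr.1; have hr1' := regA_fst2 hr.1; have hr2 := regA_snd hr.1
  have hs2 := regA_snd hs.1
  set t := s.2 / r.2 with ht
  have ht1 : 1 < t := (one_lt_div hr2).2 hlt
  have hs2eq : s.2 = t * r.2 := by rw [ht, div_mul_cancel₀ _ hr2.ne']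
  have hs1eq : s.1 = t * r.1 := by
    rw [ht]; field_simp; linear_combination -hD
  set k := ⌊t⌋ with hk
  have hf0 : 0 ≤ t - k := sub_nonneg.2 (Int.floor_le t)
  have hf1 : t - k < 1 := by have := Int.lt_floor_add_one t; linarith
  rcases eq_or_lt_of_le hf0 with hf | hf
  · apply hsr k
    have htk : t = (k:ℝ) := by linarith
    have : (k • r : ℝ × ℝ) = ((k:ℝ) * r.1, (k:ℝ) * r.2) := by
      ext <;> simp [zsmul_eq_mul]
    rw [this, Prod.ext_iff]
    constructor
    · simp [hs1eq, htk]
    · simp [hs2eq, htk]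
  · have hwL : ((s.1 - (k:ℝ)*r.1, s.2 - (k:ℝ)*r.2) : ℝ × ℝ) ∈ lat M := by
      refine lat_combo M hs.2 hr.2 1 (-k) ?_
      simp only [Prod.mk.injEq]; constructor <;> push_cast <;> ring
    have hw1 : s.1 - (k:ℝ)*r.1 = (t - k) * r.1 := by rw [hs1eq]; ring
    have hw2 : s.2 - (k:ℝ)*r.2 = (t - k) * r.2 := by rw [hs2eq]; ring
    have hwA : ((s.1 - (k:ℝ)*r.1, s.2 - (k:ℝ)*r.2) : ℝ × ℝ) ∈ regA := by
      refine mem_regA ?_ ?_ ?_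
      · show -1 < s.1 - (k:ℝ)*r.1; rw [hw1]; nlinarith
      · show s.1 - (k:ℝ)*r.1 < 1; rw [hw1]; nlinarith
      · show 0 < s.2 - (k:ℝ)*r.2; rw [hw2]; nlinarith
    have := hrmin _ ⟨hwA, hwL⟩
    simp only at this
    rw [hw2] at this
    nlinarith

lemma not_kr (r s : ℝ × ℝ) (hD : r.1 * s.2 - r.2 * s.1 ≠ 0)
    (c d : ℝ) (hd : d ≠ 0) (k : ℤ) :
    ((c*r.1 + d*s.1, c*r.2 + d*s.2) : ℝ × ℝ) ≠ k • r := by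
  intro h
  rw [Prod.ext_iff] at h
  obtain ⟨h1, h2⟩ := h
  simp only [Prod.smul_fst, Prod.smul_snd] at h1 h2
  simp only [zsmul_eq_mul] at h1 h2
  have : d * (r.1 * s.2 - r.2 * s.1) = 0 := by linear_combination r.1 * h2 - r.2 * h1
  rcases mul_eq_zero.1 this with h | h
  · exact hd h
  · exact hD h

lemma key (M : Matrix.SpecialLinearGroup (Fin 2) ℝ) (r s : ℝ × ℝ)
    (hr : r ∈ regA ∩ lat M)
    (hs : s ∈ regA ∩ lat M)
    (hsmin : ∀ p ∈ regA ∩ lat M, (∀ k : ℤ, p ≠ k • r) → s.2 ≤ p.2)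
    (hD : r.1 * s.2 - r.2 * s.1 ≠ 0)
    (a b : ℝ) (ha0 : 0 ≤ a) (ha1 : a ≤ 1) (hb0 : 0 < b) (hb1 : b < 1)
    (hwL : ((a*r.1 + b*s.1, a*r.2 + b*s.2) : ℝ × ℝ) ∈ lat M)
    (hw2 : a*r.2 + b*s.2 < s.2) : False := by
  have hr1 := regA_fst1 hr.1; have hr1' := regA_fst2 hr.1; have hr2 := regA_snd hr.1
  have hs1 := regA_fst1 hs.1; have hs1' := regA_fst2 hs.1; have hs2 := regA_snd hs.1
  have hw2pos : 0 < a*r.2 + b*s.2 := by nlinarith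
  rcases lt_or_ge (a*r.1 + b*s.1) 1 with hx1 | hx1
  · rcases lt_or_ge (-1 : ℝ) (a*r.1 + b*s.1) with hx2 | hx2
    · -- w itself is in A
      have := hsmin _ ⟨mem_regA hx2 hx1 hw2pos, hwL⟩ (not_kr r s hD a b (ne_of_gt hb0))
      simp only at this; linarith
    · -- w.1 ≤ -1 : r.1 < 0, s.1 < 0
      have hs1neg : s.1 < 0 := by nlinarith
      have hr1neg : r.1 < 0 := by nlinarith
      rcases lt_or_ge r.2 (a*r.2 + b*s.2) with hy | hy
      · -- use w - r
        have hL : (((a-1)*r.1 + b*s.1, (a-1)*r.2 + b*s.2) : ℝ × ℝ) ∈ lat M := by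
          refine lat_combo M hwL hr.2 1 (-1) ?_
          simp only [Prod.mk.injEq]; constructor <;> push_cast <;> ring
        have hA : (((a-1)*r.1 + b*s.1, (a-1)*r.2 + b*s.2) : ℝ × ℝ) ∈ regA := by
          refine mem_regA ?_ ?_ ?_ <;> simp only
          · nlinarith
          · nlinarith
          · nlinarith
        have := hsmin _ ⟨hA, hL⟩ (not_kr r s hD (a-1) b (ne_of_gt hb0))
        simp only at this; linarith
      · -- use s - w
        have hL : ((-a*r.1 + (1-b)*s.1, -a*r.2 + (1-b)*s.2) : ℝ × ℝ) ∈ lat M := by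
          refine lat_combo M hs.2 hwL 1 (-1) ?_
          simp only [Prod.mk.injEq]; constructor <;> push_cast <;> ring
        have hA : ((-a*r.1 + (1-b)*s.1, -a*r.2 + (1-b)*s.2) : ℝ × ℝ) ∈ regA := by
          refine mem_regA ?_ ?_ ?_ <;> simp only
          · nlinarith
          · nlinarith
          · nlinarith
        have := hsmin _ ⟨hA, hL⟩ (not_kr r s hD (-a) (1-b) (by linarith))
        simp only at this; linarith
  · -- w.1 ≥ 1 : r.1 > 0, s.1 > 0
    have hs1pos : 0 < s.1 := by nlinarith
    have hr1pos : 0 < r.1 := by nlinarith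
    rcases lt_or_ge r.2 (a*r.2 + b*s.2) with hy | hy
    · have hL : (((a-1)*r.1 + b*s.1, (a-1)*r.2 + b*s.2) : ℝ × ℝ) ∈ lat M := by
        refine lat_combo M hwL hr.2 1 (-1) ?_
        simp only [Prod.mk.injEq]; constructor <;> push_cast <;> ring
      have hA : (((a-1)*r.1 + b*s.1, (a-1)*r.2 + b*s.2) : ℝ × ℝ) ∈ regA := by
        refine mem_regA ?_ ?_ ?_ <;> simp only
        · nlinarith
        · nlinarith
        · nlinarith
      have := hsmin _ ⟨hA, hL⟩ (not_kr r s hD (a-1) b (ne_of_gt hb0))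
      simp only at this; linarith
    · have hL : ((-a*r.1 + (1-b)*s.1, -a*r.2 + (1-b)*s.2) : ℝ × ℝ) ∈ lat M := by
        refine lat_combo M hs.2 hwL 1 (-1) ?_
        simp only [Prod.mk.injEq]; constructor <;> push_cast <;> ring
      have hA : ((-a*r.1 + (1-b)*s.1, -a*r.2 + (1-b)*s.2) : ℝ × ℝ) ∈ regA := by
        refine mem_regA ?_ ?_ ?_ <;> simp only
        · nlinarith
        · nlinarith
        · nlinarith
      have := hsmin _ ⟨hA, hL⟩ (not_kr r s hD (-a) (1-b) (by linarith))
      simp only at this; linarith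

lemma scalar_r (M : Matrix.SpecialLinearGroup (Fin 2) ℝ) (r : ℝ × ℝ)
    (hr : r ∈ regA ∩ lat M)
    (hrmin : ∀ p ∈ regA ∩ lat M, r.2 ≤ p.2)
    (a : ℝ) (ha0 : 0 ≤ a) (ha1 : a ≤ 1)
    (hL : ((a*r.1, a*r.2) : ℝ × ℝ) ∈ lat M) : a = 0 ∨ a = 1 := by
  have hr1 := regA_fst1 hr.1; have hr1' := regA_fst2 hr.1; have hr2 := regA_snd hr.1
  rcases eq_or_lt_of_le ha0 with h0 | h0
  · exact Or.inl h0.symm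
  rcases eq_or_lt_of_le ha1 with h1 | h1
  · exact Or.inr h1
  exfalso
  have hA : ((a*r.1, a*r.2) : ℝ × ℝ) ∈ regA := by
    refine mem_regA ?_ ?_ ?_ <;> simp only <;> nlinarith
  have := hrmin _ ⟨hA, hL⟩
  simp only at this; nlinarith

lemma para (M : Matrix.SpecialLinearGroup (Fin 2) ℝ) (r s : ℝ × ℝ)
    (hr : r ∈ regA ∩ lat M)
    (hrmin : ∀ p ∈ regA ∩ lat M, r.2 ≤ p.2)
    (hs : s ∈ regA ∩ lat M)
    (hsmin : ∀ p ∈ regA ∩ lat M, (∀ k : ℤ, p ≠ k • r) → s.2 ≤ p.2)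
    (hD : r.1 * s.2 - r.2 * s.1 ≠ 0)
    (hlt : r.2 < s.2)
    (a b : ℝ) (ha0 : 0 ≤ a) (ha1 : a ≤ 1) (hb0 : 0 ≤ b) (hb1 : b ≤ 1)
    (hwL : ((a*r.1 + b*s.1, a*r.2 + b*s.2) : ℝ × ℝ) ∈ lat M) :
    (a = 0 ∨ a = 1) ∧ (b = 0 ∨ b = 1) := by
  have hr2 := regA_snd hr.1; have hs2 := regA_snd hs.1
  have hbcase : b = 0 ∨ b = 1 := by
    rcases eq_or_lt_of_le hb0 with h0 | h0
    · exact Or.inl h0.symm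
    rcases eq_or_lt_of_le hb1 with h1 | h1
    · exact Or.inr h1
    exfalso
    rcases lt_or_ge (a*r.2 + b*s.2) s.2 with hy | hy
    · exact key M r s hr hs hsmin hD a b ha0 ha1 h0 h1 hwL hy
    · have hL : (((1-a)*r.1 + (1-b)*s.1, (1-a)*r.2 + (1-b)*s.2) : ℝ × ℝ) ∈ lat M := by
        have hrs : ((1*r.1 + 1*s.1, 1*r.2 + 1*s.2) : ℝ × ℝ) ∈ lat M :=
          lat_combo M hr.2 hs.2 1 1 (by norm_num)
        refine lat_combo M hrs hwL 1 (-1) ?_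
        simp only [Prod.mk.injEq]; constructor <;> push_cast <;> ring
      exact key M r s hr hs hsmin hD (1-a) (1-b) (by linarith) (by linarith)
        (by linarith) (by linarith) hL (by nlinarith)
  refine ⟨?_, hbcase⟩
  rcases hbcase with hb | hb
  · subst hb
    refine scalar_r M r hr hrmin a ha0 ha1 ?_
    have : ((a*r.1, a*r.2) : ℝ × ℝ) = (a*r.1 + 0*s.1, a*r.2 + 0*s.2) := by norm_num
    rw [this]; exact hwL
  · subst hb
    refine scalar_r M r hr hrmin a ha0 ha1 ?_
    refine lat_combo M hwL hs.2 1 (-1) ?_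
    simp only [Prod.mk.injEq]; constructor <;> push_cast <;> ring


/-- The parallelogram 0, r, s, r+s contains no other lattice points, and
{r, s} is a basis of the lattice. -/
theorem parallelogram_basis (M : Matrix.SpecialLinearGroup (Fin 2) ℝ)
    (r s : ℝ × ℝ)
    (hr : r ∈ regA ∩ lat M)
    (hrmin : ∀ p ∈ regA ∩ lat M, r.2 ≤ p.2)
    (hs : s ∈ regA ∩ lat M)
    (hsr : ∀ k : ℤ, s ≠ k • r)
    (hsmin : ∀ p ∈ regA ∩ lat M, (∀ k : ℤ, p ≠ k • r) → s.2 ≤ p.2)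
    (hlt : r.2 < s.2) :
    (∀ p ∈ lat M, (∃ a b : ℝ, 0 ≤ a ∧ a ≤ 1 ∧ 0 ≤ b ∧ b ≤ 1 ∧ p = a • r + b • s) →
        p = 0 ∨ p = r ∨ p = s ∨ p = r + s) ∧
    lat M = { p : ℝ × ℝ | ∃ m n : ℤ, p = m • r + n • s } := by
  have hD := D_ne M r s hr hrmin hs hsr hlt
  constructor
  · rintro p hp ⟨a, b, ha0, ha1, hb0, hb1, hab⟩
    have hcoord : p = ((a*r.1 + b*s.1, a*r.2 + b*s.2) : ℝ × ℝ) := by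
      rw [hab, Prod.ext_iff]
      constructor <;> simp [smul_eq_mul]
    have hwL : ((a*r.1 + b*s.1, a*r.2 + b*s.2) : ℝ × ℝ) ∈ lat M := hcoord ▸ hp
    obtain ⟨hac, hbc⟩ := para M r s hr hrmin hs hsmin hD hlt a b ha0 ha1 hb0 hb1 hwL
    rcases hac with ha | ha <;> rcases hbc with hb | hb <;> subst ha <;> subst hb
    · left; rw [hcoord, Prod.ext_iff]; norm_num
    · right; right; left; rw [hcoord, Prod.ext_iff]; norm_num
    · right; left; rw [hcoord, Prod.ext_iff]; norm_num
    · right; right; right; rw [hcoord, Prod.ext_iff]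
      constructor <;> simp
  · ext p
    simp only [Set.mem_setOf_eq]
    constructor
    · intro hp
      obtain ⟨α, β, h1, h2⟩ : ∃ α β : ℝ, p.1 = α*r.1 + β*s.1 ∧ p.2 = α*r.2 + β*s.2 := by
        refine ⟨(p.1*s.2 - p.2*s.1)/(r.1*s.2 - r.2*s.1),
                (r.1*p.2 - r.2*p.1)/(r.1*s.2 - r.2*s.1), ?_, ?_⟩
        · rw [div_mul_eq_mul_div, div_mul_eq_mul_div, ← add_div, eq_div_iff hD]
          ring
        · rw [div_mul_eq_mul_div, div_mul_eq_mul_div, ← add_div, eq_div_iff hD]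
          ring
      set a := α - ⌊α⌋ with hadef
      set b := β - ⌊β⌋ with hbdef
      have ha0 : 0 ≤ a := sub_nonneg.2 (Int.floor_le α)
      have hb0 : 0 ≤ b := sub_nonneg.2 (Int.floor_le β)
      have ha1 : a < 1 := by have := Int.lt_floor_add_one α; rw [hadef]; linarith
      have hb1 : b < 1 := by have := Int.lt_floor_add_one β; rw [hbdef]; linarith
      have hwL : ((a*r.1 + b*s.1, a*r.2 + b*s.2) : ℝ × ℝ) ∈ lat M := by
        have hu : (((⌊α⌋:ℝ)*r.1 + (⌊β⌋:ℝ)*s.1, (⌊α⌋:ℝ)*r.2 + (⌊β⌋:ℝ)*s.2) : ℝ × ℝ) ∈ lat M :=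
          lat_combo M hr.2 hs.2 ⌊α⌋ ⌊β⌋ rfl
        refine lat_combo M hp hu 1 (-1) ?_
        simp only [Prod.mk.injEq]
        constructor
        · push_cast; linear_combination -h1
        · push_cast; linear_combination -h2
      obtain ⟨hac, hbc⟩ := para M r s hr hrmin hs hsmin hD hlt a b ha0 (le_of_lt ha1)
        hb0 (le_of_lt hb1) hwL
      have ha : a = 0 := by rcases hac with h | h; exact h; linarith
      have hb : b = 0 := by rcases hbc with h | h; exact h; linarith
      have hαe : α - (⌊α⌋:ℝ) = 0 := by rw [hadef] at ha; exact ha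
      have hβe : β - (⌊β⌋:ℝ) = 0 := by rw [hbdef] at hb; exact hb
      refine ⟨⌊α⌋, ⌊β⌋, ?_⟩
      rw [Prod.ext_iff]
      constructor
      · simp only [Prod.fst_add, Prod.smul_fst]
        simp only [zsmul_eq_mul]
        linear_combination h1 + r.1 * hαe + s.1 * hβe
      · simp only [Prod.snd_add, Prod.smul_snd]
        simp only [zsmul_eq_mul]
        linear_combination h2 + r.2 * hαe + s.2 * hβe
    · rintro ⟨m, n, rfl⟩
      refine lat_combo M hr.2 hs.2 m n ?_
      rw [Prod.ext_iff]
      constructor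
      · simp only [Prod.fst_add, Prod.smul_fst]
        simp only [zsmul_eq_mul]
      · simp only [Prod.snd_add, Prod.smul_snd]
        simp only [zsmul_eq_mul]
end
end

section
/- For every M ∈ SL(2,ℝ), the function t ↦ F(M,t) on (0,1], where F(M,t) = min{ y > 0 : (x,y) ∈ ℤ²M, -t < x ≤ 1 - t }, takes at most three distinct values; moreover, if it takes exactly three values, then the largest value is the sum of the other two. -/
open Matrix Set

noncomputable section

namespace TG
variable (M : Matrix.SpecialLinearGroup (Fin 2) ℝ)

lemma detM : M.1 0 0 * M.1 1 1 - M.1 0 1 * M.1 1 0 = 1 := by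
  have h := M.2
  rw [Matrix.det_fin_two] at h
  linarith

lemma lat_mem_iff {M : Matrix.SpecialLinearGroup (Fin 2) ℝ} {x y : ℝ} : (x, y) ∈ lat M ↔
    ∃ m n : ℤ, x = (m : ℝ) * M.1 0 0 + (n : ℝ) * M.1 1 0 ∧
               y = (m : ℝ) * M.1 0 1 + (n : ℝ) * M.1 1 1 := by
  simp [lat, Prod.ext_iff]

lemma lat_sub {M : Matrix.SpecialLinearGroup (Fin 2) ℝ} {x y x' y' : ℝ} (h : (x, y) ∈ lat M) (h' : (x', y') ∈ lat M) :
    (x - x', y - y') ∈ lat M := by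
  rw [lat_mem_iff] at h h' ⊢
  obtain ⟨m, n, hx, hy⟩ := h
  obtain ⟨m', n', hx', hy'⟩ := h'
  exact ⟨m - m', n - n', by push_cast; rw [hx, hx']; ring, by push_cast; rw [hy, hy']; ring⟩

lemma lat_add {M : Matrix.SpecialLinearGroup (Fin 2) ℝ} {x y x' y' : ℝ} (h : (x, y) ∈ lat M) (h' : (x', y') ∈ lat M) :
    (x + x', y + y') ∈ lat M := by
  rw [lat_mem_iff] at h h' ⊢
  obtain ⟨m, n, hx, hy⟩ := h
  obtain ⟨m', n', hx', hy'⟩ := h'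
  exact ⟨m + m', n + n', by push_cast; rw [hx, hx']; ring, by push_cast; rw [hy, hy']; ring⟩

lemma lat_neg {M : Matrix.SpecialLinearGroup (Fin 2) ℝ} {x y : ℝ} (h : (x, y) ∈ lat M) : (-x, -y) ∈ lat M := by
  rw [lat_mem_iff] at h ⊢
  obtain ⟨m, n, hx, hy⟩ := h
  exact ⟨-m, -n, by push_cast; rw [hx]; ring, by push_cast; rw [hy]; ring⟩

/-- recovery of integer coordinates -/
lemma recover {x y : ℝ} {m n : ℤ}
    (hx : x = (m : ℝ) * M.1 0 0 + (n : ℝ) * M.1 1 0)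
    (hy : y = (m : ℝ) * M.1 0 1 + (n : ℝ) * M.1 1 1) :
    (m : ℝ) = x * M.1 1 1 - y * M.1 1 0 ∧ (n : ℝ) = y * M.1 0 0 - x * M.1 0 1 := by
  have hd := detM M
  constructor
  · rw [hx, hy]; linear_combination (-(m : ℝ)) * hd
  · rw [hx, hy]; linear_combination (-(n : ℝ)) * hd

/-- lattice points in a box form a finite set -/
lemma box_finite (C B : ℝ) :
    {p : ℝ × ℝ | p ∈ lat M ∧ |p.1| ≤ C ∧ |p.2| ≤ B}.Finite := by
  set a := M.1 0 0; set b := M.1 0 1; set c := M.1 1 0; set d := M.1 1 1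
  set K : ℤ := max ⌈C * |d| + B * |c|⌉ ⌈B * |a| + C * |b|⌉ with hK
  apply Set.Finite.subset (Set.Finite.image
    (f := fun q : ℤ × ℤ => ((q.1 : ℝ) * a + (q.2 : ℝ) * c, (q.1 : ℝ) * b + (q.2 : ℝ) * d))
    ((Set.finite_Icc (-K) K).prod (Set.finite_Icc (-K) K)))
  rintro ⟨x, y⟩ ⟨hp, hx, hy⟩
  rw [lat_mem_iff] at hp
  obtain ⟨m, n, hxe, hye⟩ := hp
  obtain ⟨hm, hn⟩ := recover M hxe hye
  have hmb : |(m : ℝ)| ≤ C * |d| + B * |c| := by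
    rw [hm]
    calc |x * d - y * c| ≤ |x * d| + |y * c| := abs_sub _ _
      _ = |x| * |d| + |y| * |c| := by rw [abs_mul, abs_mul]
      _ ≤ C * |d| + B * |c| := add_le_add (mul_le_mul_of_nonneg_right hx (abs_nonneg _))
          (mul_le_mul_of_nonneg_right hy (abs_nonneg _))
  have hnb : |(n : ℝ)| ≤ B * |a| + C * |b| := by
    rw [hn]
    calc |y * a - x * b| ≤ |y * a| + |x * b| := abs_sub _ _
      _ = |y| * |a| + |x| * |b| := by rw [abs_mul, abs_mul]
      _ ≤ B * |a| + C * |b| := add_le_add (mul_le_mul_of_nonneg_right hy (abs_nonneg _))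
          (mul_le_mul_of_nonneg_right hx (abs_nonneg _))
  refine ⟨(m, n), ⟨?_, ?_⟩, ?_⟩
  · have : |(m : ℝ)| ≤ (K : ℝ) := hmb.trans ((Int.le_ceil _).trans (by exact_mod_cast le_max_left _ _))
    have : |m| ≤ K := by exact_mod_cast (by rwa [← Int.cast_abs] at this : ((|m| : ℤ) : ℝ) ≤ (K : ℝ))
    exact Set.mem_Icc.2 (abs_le.1 this)
  · have : |(n : ℝ)| ≤ (K : ℝ) := hnb.trans ((Int.le_ceil _).trans (by exact_mod_cast le_max_right _ _))
    have : |n| ≤ K := by exact_mod_cast (by rwa [← Int.cast_abs] at this : ((|n| : ℤ) : ℝ) ≤ (K : ℝ))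
    exact Set.mem_Icc.2 (abs_le.1 this)
  · simp [hxe, hye]; exact ⟨rfl, rfl⟩



/-- a nonempty set of positive reals with finite bounded slices has a least element -/
lemma isLeast_sInf' {S : Set ℝ} (hpos : ∀ y ∈ S, 0 < y) (hne : S.Nonempty)
    (hfin : ∀ B : ℝ, (S ∩ Set.Ioc 0 B).Finite) : IsLeast S (sInf S) := by
  obtain ⟨y₀, hy₀⟩ := hne
  have hy₀pos := hpos y₀ hy₀
  have hTfin : (S ∩ Set.Ioc 0 y₀).Finite := hfin y₀
  have hTne : (S ∩ Set.Ioc 0 y₀).Nonempty := ⟨y₀, hy₀, hy₀pos, le_refl _⟩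
  obtain ⟨μ, hμ, hmin⟩ := Set.exists_min_image _ id hTfin hTne
  have hleast : IsLeast S μ := by
    refine ⟨hμ.1, fun z hz => ?_⟩
    rcases le_or_gt z y₀ with h | h
    · exact hmin z ⟨hz, hpos z hz, h⟩
    · exact le_trans (hmin y₀ ⟨hy₀, hy₀pos, le_refl _⟩) h.le
  rwa [hleast.csInf_eq]

/-- the subgroup of x-coordinates -/
def xg : AddSubgroup ℝ where
  carrier := {x | ∃ m n : ℤ, x = (m : ℝ) * M.1 0 0 + (n : ℝ) * M.1 1 0}
  zero_mem' := ⟨0, 0, by push_cast; ring⟩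
  add_mem' := by
    rintro x y ⟨m, n, rfl⟩ ⟨m', n', rfl⟩
    exact ⟨m + m', n + n', by push_cast; ring⟩
  neg_mem' := by
    rintro x ⟨m, n, rfl⟩
    exact ⟨-m, -n, by push_cast; ring⟩

lemma xg_point {x : ℝ} (hx : x ∈ xg M) : ∃ y : ℝ, (x, y) ∈ lat M := by
  obtain ⟨m, n, rfl⟩ := hx
  exact ⟨(m : ℝ) * M.1 0 1 + (n : ℝ) * M.1 1 1, lat_mem_iff.2 ⟨m, n, rfl, rfl⟩⟩

/-- dichotomy: either a positive vertical vector, or dense x-coordinates -/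
lemma vert_or_dense :
    (∃ y : ℝ, 0 < y ∧ ((0 : ℝ), y) ∈ lat M) ∨ Dense (xg M : Set ℝ) := by
  rcases AddSubgroup.dense_or_cyclic (xg M) with h | ⟨β, hβ⟩
  · exact Or.inr h
  left
  -- a = pβ, c = qβ, relation q*a - p*c = 0 with (q,-p) ≠ 0
  have ha : M.1 0 0 ∈ xg M := ⟨1, 0, by push_cast; ring⟩
  have hc : M.1 1 0 ∈ xg M := ⟨0, 1, by push_cast; ring⟩
  rw [hβ, AddSubgroup.mem_closure_singleton] at ha hc
  obtain ⟨p, hp⟩ := ha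
  obtain ⟨q, hq⟩ := hc
  -- vertical point (0, y0) with y0 = q b - p d ≠ 0
  have hx0 : (q : ℝ) * M.1 0 0 + (-p : ℝ) * M.1 1 0 = 0 := by
    rw [← hp, ← hq]; push_cast [zsmul_eq_mul]; ring
  have hpq : ¬((q : ℝ) = 0 ∧ (p : ℝ) = 0) := by
    rintro ⟨hq0, hp0⟩
    have h1 : M.1 0 0 = 0 := by rw [← hp, zsmul_eq_mul, hp0, zero_mul]
    have h2 : M.1 1 0 = 0 := by rw [← hq, zsmul_eq_mul, hq0, zero_mul]
    have := detM M
    rw [h1, h2] at this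
    simp at this
  set y0 : ℝ := (q : ℝ) * M.1 0 1 + (-p : ℝ) * M.1 1 1 with hy0
  have hmem : ((0 : ℝ), y0) ∈ lat M := by
    rw [lat_mem_iff]
    exact ⟨q, -p, by push_cast; linarith [hx0], by push_cast [hy0]; ring⟩
  have hy0ne : y0 ≠ 0 := by
    intro h0
    -- recover q, -p
    have hd := detM M
    have hq0 : (q : ℝ) = 0 := by
      have : (q : ℝ) * (M.1 0 0 * M.1 1 1 - M.1 0 1 * M.1 1 0) =
          0 * M.1 1 1 - y0 * M.1 1 0 := by rw [← hx0, hy0]; ring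
      rw [hd, h0] at this; simpa using this
    have hp0 : (p : ℝ) = 0 := by
      have : (-(p : ℝ)) * (M.1 0 0 * M.1 1 1 - M.1 0 1 * M.1 1 0) =
          y0 * M.1 0 0 - 0 * M.1 0 1 := by rw [← hx0, hy0]; ring
      rw [hd, h0] at this; simpa using this
    exact hpq ⟨hq0, hp0⟩
  rcases hy0ne.lt_or_gt with h | h
  · exact ⟨-y0, by linarith, by simpa using lat_neg hmem⟩
  · exact ⟨y0, h, hmem⟩

lemma dense_inter_infinite {G : AddSubgroup ℝ} (hG : Dense (G : Set ℝ)) {lo hi : ℝ}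
    (h : lo < hi) : ((G : Set ℝ) ∩ Set.Ioo lo hi).Infinite := by
  intro hfin
  have hne : ((G : Set ℝ) ∩ Set.Ioo lo hi).Nonempty := by
    obtain ⟨g, hg, hgi⟩ := hG.exists_between h
    exact ⟨g, hg, hgi⟩
  obtain ⟨μ, hμ, hmin⟩ := Set.exists_min_image _ id hfin hne
  obtain ⟨g, hg, hgi⟩ := hG.exists_between (show lo < μ from hμ.2.1)
  have : μ ≤ g := hmin g ⟨hg, hgi.1, hgi.2.trans hμ.2.2⟩
  exact absurd hgi.2 (not_lt.2 this)

/-- key existence: in the dense case, both half strips contain a lattice point -/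
lemma strip_nonempty_left (hG : Dense (xg M : Set ℝ)) :
    ∃ x y : ℝ, (x, y) ∈ lat M ∧ -1 < x ∧ x ≤ 0 ∧ 0 < y := by
  by_contra hcon
  push_neg at hcon
  -- all lattice points with x in (-1,0] have y ≤ 0 ; hence x ∈ [0,1) gives y ≥ 0
  have hneg : ∀ x y : ℝ, (x, y) ∈ lat M → -1 < x → x ≤ 0 → y ≤ 0 := by
    intro x y h h1 h2
    by_contra hy
    exact absurd (lt_of_not_ge hy) (by simpa using hcon x y h h1 h2)
  have hpos : ∀ x y : ℝ, (x, y) ∈ lat M → 0 ≤ x → x < 1 → 0 ≤ y := by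
    intro x y h h1 h2
    have := hneg (-x) (-y) (lat_neg h) (by linarith) (by linarith)
    linarith
  -- a point with x ∈ (1/2, 1)
  obtain ⟨g, hg, hgi⟩ := hG.exists_between (show (1/2 : ℝ) < 1 by norm_num)
  obtain ⟨y0, hy0⟩ := xg_point M hg
  -- infinitely many points with x ∈ (0, 1/2), all with 0 ≤ y ≤ y0 : contradiction
  have hQ : {p : ℝ × ℝ | p ∈ lat M ∧ p.1 ∈ Set.Ioo (0 : ℝ) (1/2)}.Infinite := by
    apply Set.Infinite.of_image Prod.fst
    apply Set.Infinite.mono (s := (xg M : Set ℝ) ∩ Set.Ioo 0 (1/2))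
    · rintro x ⟨hx, hxi⟩
      obtain ⟨y, hy⟩ := xg_point M hx
      exact ⟨(x, y), ⟨hy, hxi⟩, rfl⟩
    · exact dense_inter_infinite hG (by norm_num)
  apply hQ
  apply Set.Finite.subset (box_finite M 1 |y0|)
  rintro ⟨x, y⟩ ⟨hmem, hx1, hx2⟩
  have hy1 : 0 ≤ y := hpos x y hmem hx1.le (by linarith)
  have hy2 : y - y0 ≤ 0 := by
    apply hneg (x - g) (y - y0) (lat_sub hmem hy0) (by linarith [hgi.2]) (by linarith [hgi.1])
  refine ⟨hmem, ?_, ?_⟩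
  · simp only [abs_le]; constructor <;> [linarith; linarith]
  · rw [abs_le]
    constructor
    · linarith [neg_abs_le y0, le_abs_self y0]
    · linarith [le_abs_self y0]

/-- key existence: right half strip -/
lemma strip_nonempty_right (hG : Dense (xg M : Set ℝ)) :
    ∃ x y : ℝ, (x, y) ∈ lat M ∧ 0 ≤ x ∧ x < 1 ∧ 0 < y := by
  by_contra hcon
  push_neg at hcon
  have hneg : ∀ x y : ℝ, (x, y) ∈ lat M → 0 ≤ x → x < 1 → y ≤ 0 := by
    intro x y h h1 h2
    by_contra hy
    exact absurd (lt_of_not_ge hy) (by simpa using hcon x y h h1 h2)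
  have hpos : ∀ x y : ℝ, (x, y) ∈ lat M → -1 < x → x ≤ 0 → 0 ≤ y := by
    intro x y h h1 h2
    have := hneg (-x) (-y) (lat_neg h) (by linarith) (by linarith)
    linarith
  obtain ⟨g, hg, hgi⟩ := hG.exists_between (show (1/2 : ℝ) < 1 by norm_num)
  obtain ⟨y0, hy0⟩ := xg_point M hg
  have hQ : {p : ℝ × ℝ | p ∈ lat M ∧ p.1 ∈ Set.Ioo (0 : ℝ) (1/2)}.Infinite := by
    apply Set.Infinite.of_image Prod.fst
    apply Set.Infinite.mono (s := (xg M : Set ℝ) ∩ Set.Ioo 0 (1/2))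
    · rintro x ⟨hx, hxi⟩
      obtain ⟨y, hy⟩ := xg_point M hx
      exact ⟨(x, y), ⟨hy, hxi⟩, rfl⟩
    · exact dense_inter_infinite hG (by norm_num)
  apply hQ
  apply Set.Finite.subset (box_finite M 1 |y0|)
  rintro ⟨x, y⟩ ⟨hmem, hx1, hx2⟩
  have hy1 : y ≤ 0 := hneg x y hmem hx1.le (by linarith)
  have hy2 : 0 ≤ y - y0 :=
    hpos (x - g) (y - y0) (lat_sub hmem hy0) (by linarith [hgi.2]) (by linarith [hgi.1])
  refine ⟨hmem, ?_, ?_⟩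
  · simp only [abs_le]; constructor <;> [linarith; linarith]
  · rw [abs_le]
    constructor
    · linarith [neg_abs_le y0]
    · linarith [le_abs_self y0, neg_abs_le y0]


lemma strip_nonempty_left' : ∃ x y : ℝ, (x, y) ∈ lat M ∧ -1 < x ∧ x ≤ 0 ∧ 0 < y := by
  rcases vert_or_dense M with ⟨y, hy, hmem⟩ | hG
  · exact ⟨0, y, hmem, by norm_num, le_refl 0, hy⟩
  · exact strip_nonempty_left M hG

lemma strip_nonempty_right' : ∃ x y : ℝ, (x, y) ∈ lat M ∧ 0 ≤ x ∧ x < 1 ∧ 0 < y := by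
  rcases vert_or_dense M with ⟨y, hy, hmem⟩ | hG
  · exact ⟨0, y, hmem, le_refl 0, by norm_num, hy⟩
  · exact strip_nonempty_right M hG

def Sone : Set ℝ := {y | 0 < y ∧ ∃ x : ℝ, (x, y) ∈ lat M ∧ -1 < x ∧ x ≤ 0}
def Stwo : Set ℝ := {y | 0 < y ∧ ∃ x : ℝ, (x, y) ∈ lat M ∧ 0 ≤ x ∧ x < 1}

lemma slice_fin (P : ℝ → Prop) (hP : ∀ x, P x → |x| ≤ 1) (B : ℝ) :
    ({y | 0 < y ∧ ∃ x : ℝ, (x, y) ∈ lat M ∧ P x} ∩ Set.Ioc 0 B).Finite := by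
  apply Set.Finite.subset ((box_finite M 1 B).image Prod.snd)
  rintro y ⟨⟨hy, x, hmem, hPx⟩, hyB⟩
  rw [Set.mem_Ioc] at hyB
  exact ⟨(x, y), ⟨hmem, hP x hPx, by
    rw [abs_le]; exact ⟨by linarith [hyB.1], hyB.2⟩⟩, rfl⟩

lemma leastOne : IsLeast (Sone M) (sInf (Sone M)) := by
  apply isLeast_sInf' (fun y hy => hy.1)
  · obtain ⟨x, y, h, h1, h2, h3⟩ := strip_nonempty_left' M
    exact ⟨y, h3, x, h, h1, h2⟩
  · exact slice_fin M _ (fun x hx => by rw [abs_le]; exact ⟨by linarith [hx.1], by linarith [hx.2]⟩)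

lemma leastTwo : IsLeast (Stwo M) (sInf (Stwo M)) := by
  apply isLeast_sInf' (fun y hy => hy.1)
  · obtain ⟨x, y, h, h1, h2, h3⟩ := strip_nonempty_right' M
    exact ⟨y, h3, x, h, h1, h2⟩
  · exact slice_fin M _ (fun x hx => by rw [abs_le]; exact ⟨by linarith [hx.1], by linarith [hx.2]⟩)

/-- the main valuation lemma -/
lemma F_val {t : ℝ} (ht0 : 0 < t) (ht1 : t ≤ 1) :
    F M t = sInf (Sone M) ∨ F M t = sInf (Stwo M) ∨
    F M t = sInf (Sone M) + sInf (Stwo M) := by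
  obtain ⟨⟨hy1pos, x1, hmem1, hx1a, hx1b⟩, hmin1⟩ := leastOne M
  obtain ⟨⟨hy2pos, x2, hmem2, hx2a, hx2b⟩, hmin2⟩ := leastTwo M
  set y1 := sInf (Sone M)
  set y2 := sInf (Stwo M)
  -- Fset M t is nonempty
  have hne : (Fset M t).Nonempty := by
    rcases lt_or_ge (-t) x1 with h1 | h1
    · exact ⟨y1, hy1pos, x1, hmem1, h1, by linarith⟩
    rcases le_or_gt x2 (1 - t) with h2 | h2
    · exact ⟨y2, hy2pos, x2, hmem2, by linarith, h2⟩
    · exact ⟨y1 + y2, by linarith, x1 + x2, lat_add hmem1 hmem2, by linarith, by linarith⟩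
  have hleast : IsLeast (Fset M t) (F M t) := by
    apply isLeast_sInf' (fun y hy => hy.1) hne
    exact slice_fin M _ (fun x hx => by rw [abs_le]; exact ⟨by linarith [hx.1], by linarith [hx.2]⟩)
  obtain ⟨⟨hypos, x, hxmem, hxa, hxb⟩, hlb⟩ := hleast
  set y := F M t with hy
  -- upper bounds on F M t from admissible points
  have hup : ∀ z ∈ Fset M t, y ≤ z := hlb
  rcases le_or_gt x 0 with hx0 | hx0
  · -- minimizer in left strip
    have hyge1 : y1 ≤ y := hmin1 ⟨hypos, x, hxmem, by linarith, hx0⟩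
    rcases lt_or_ge (-t) x1 with h1 | h1
    · left
      have : y ≤ y1 := hup y1 ⟨hy1pos, x1, hmem1, h1, by linarith⟩
      linarith
    · rcases eq_or_lt_of_le hyge1 with heq | hlt
      · exact Or.inl heq.symm
      · -- (x - x1, y - y1) is in the right strip
        have hdm : (x - x1, y - y1) ∈ lat M := lat_sub hxmem hmem1
        have h2 : y2 ≤ y - y1 := hmin2 ⟨by linarith, x - x1, hdm, by linarith, by linarith⟩
        rcases le_or_gt x2 (1 - t) with h3 | h3
        · have : y ≤ y2 := hup y2 ⟨hy2pos, x2, hmem2, by linarith, h3⟩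
          linarith
        · right; right
          have : y ≤ y1 + y2 := hup (y1 + y2)
            ⟨by linarith, x1 + x2, lat_add hmem1 hmem2, by linarith, by linarith⟩
          linarith
  · -- minimizer in right strip
    have hyge2 : y2 ≤ y := hmin2 ⟨hypos, x, hxmem, by linarith, by linarith⟩
    rcases le_or_gt x2 (1 - t) with h2 | h2
    · right; left
      have : y ≤ y2 := hup y2 ⟨hy2pos, x2, hmem2, by linarith, h2⟩
      linarith
    · rcases eq_or_lt_of_le hyge2 with heq | hlt
      · exact Or.inr (Or.inl heq.symm)
      · have hdm : (x - x2, y - y2) ∈ lat M := lat_sub hxmem hmem2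
        have h1 : y1 ≤ y - y2 := hmin1 ⟨by linarith, x - x2, hdm, by linarith, by linarith⟩
        rcases lt_or_ge (-t) x1 with h3 | h3
        · have : y ≤ y1 := hup y1 ⟨hy1pos, x1, hmem1, h3, by linarith⟩
          linarith
        · right; right
          have : y ≤ y1 + y2 := hup (y1 + y2)
            ⟨by linarith, x1 + x2, lat_add hmem1 hmem2, by linarith, by linarith⟩
          linarith


end TG

/-- For fixed M, the function t ↦ F(M,t) takes at most three values; if exactly
three, the largest is the sum of the other two. -/
theorem F_three_values (M : Matrix.SpecialLinearGroup (Fin 2) ℝ) :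
    {v : ℝ | ∃ t : ℝ, 0 < t ∧ t ≤ 1 ∧ F M t = v}.ncard ≤ 3 ∧
    (∀ a b c : ℝ, {v : ℝ | ∃ t : ℝ, 0 < t ∧ t ≤ 1 ∧ F M t = v} = {a, b, c} →
      a < b → b < c → c = a + b) := by
  obtain ⟨⟨hy1pos, -⟩, -⟩ := TG.leastOne M
  obtain ⟨⟨hy2pos, -⟩, -⟩ := TG.leastTwo M
  set y1 := sInf (TG.Sone M) with hy1
  set y2 := sInf (TG.Stwo M) with hy2
  set V := {v : ℝ | ∃ t : ℝ, 0 < t ∧ t ≤ 1 ∧ F M t = v} with hV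
  have hVsub : V ⊆ {y1, y2, y1 + y2} := by
    rintro v ⟨t, ht0, ht1, rfl⟩
    rcases TG.F_val M ht0 ht1 with h | h | h <;> simp [h, hy1, hy2]
  have hTfin : ({y1, y2, y1 + y2} : Set ℝ).Finite :=
    (Set.finite_singleton _).insert _ |>.insert _
  constructor
  · calc V.ncard ≤ ({y1, y2, y1 + y2} : Set ℝ).ncard := Set.ncard_le_ncard hVsub hTfin
      _ ≤ ({y2, y1 + y2} : Set ℝ).ncard + 1 := Set.ncard_insert_le _ _
      _ ≤ (({y1 + y2} : Set ℝ).ncard + 1) + 1 := by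
          exact Nat.add_le_add_right (Set.ncard_insert_le _ _) 1
      _ ≤ 3 := by rw [Set.ncard_singleton]
  · intro a b c habc hab hbc
    rw [habc] at hVsub
    have ha : a ∈ ({y1, y2, y1 + y2} : Set ℝ) := hVsub (by simp)
    have hb : b ∈ ({y1, y2, y1 + y2} : Set ℝ) := hVsub (by simp)
    have hc : c ∈ ({y1, y2, y1 + y2} : Set ℝ) := hVsub (by simp)
    simp only [Set.mem_insert_iff, Set.mem_singleton_iff] at ha hb hc
    -- c must be y1 + y2
    rcases hc with hc | hc | hc
    · -- c = y1 : then a, b < y1, both must equal y2, contradiction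
      exfalso
      rcases ha with ha | ha | ha <;> rcases hb with hb | hb | hb <;> linarith
    · exfalso
      rcases ha with ha | ha | ha <;> rcases hb with hb | hb | hb <;> linarith
    · rcases ha with ha | ha | ha <;> rcases hb with hb | hb | hb <;> linarith
end
end

section
/- Let M ∈ SL(2,ℝ), let A = (-1,1) × (0,∞), and suppose every point of A ∩ ℤ²M lies on ℤr for the point r = (r₁,r₂) ∈ A ∩ ℤ²M of minimal second coordinate. Then F(M,t) = r₂ for all t ∈ (0,1], where F(M,t) = min{ y > 0 : (x,y) ∈ ℤ²M, -t < x ≤ 1 - t }. -/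
open Matrix Set

noncomputable section

lemma exists_small_comb (a c : ℝ) (ε : ℝ) (hε : 0 < ε) :
    ∃ m n : ℤ, ¬(m = 0 ∧ n = 0) ∧ |(m : ℝ) * a + (n : ℝ) * c| < ε := by
  by_cases ha : a = 0
  · exact ⟨1, 0, by simp, by simp [ha, hε]⟩
  by_cases hc : c = 0
  · exact ⟨0, 1, by simp, by simp [hc, hε]⟩
  set S : AddSubgroup ℝ :=
    { carrier := {x | ∃ m n : ℤ, x = (m : ℝ) * a + (n : ℝ) * c}
      zero_mem' := ⟨0, 0, by simp⟩
      add_mem' := by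
        rintro x y ⟨m, n, rfl⟩ ⟨m', n', rfl⟩
        exact ⟨m + m', n + n', by push_cast; ring⟩
      neg_mem' := by
        rintro x ⟨m, n, rfl⟩
        exact ⟨-m, -n, by push_cast; ring⟩ } with hS
  rcases S.dense_or_cyclic with hd | ⟨g, hg⟩
  · have h2 : (ε / 2 : ℝ) ∈ closure (S : Set ℝ) := hd _
    rcases Metric.mem_closure_iff.1 h2 (ε / 2) (by linarith) with ⟨y, hy, hdist⟩
    obtain ⟨m, n, rfl⟩ := hy
    have hne : (m : ℝ) * a + (n : ℝ) * c ≠ 0 := by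
      rw [Real.dist_eq] at hdist
      intro h
      rw [h] at hdist
      rw [abs_of_pos (by linarith)] at hdist
      linarith
    refine ⟨m, n, ?_, ?_⟩
    · rintro ⟨rfl, rfl⟩; simp at hne
    · rw [Real.dist_eq] at hdist
      have hx := abs_lt.1 hdist
      rw [abs_lt]
      constructor <;> linarith [hx.1, hx.2]
  · have haS : a ∈ S := ⟨1, 0, by simp⟩
    have hcS : c ∈ S := ⟨0, 1, by simp⟩
    rw [hg, AddSubgroup.mem_closure_singleton] at haS hcS
    obtain ⟨p, hp⟩ := haS
    obtain ⟨q, hq⟩ := hcS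
    have hp0 : p ≠ 0 := by rintro rfl; simp at hp; exact ha hp.symm
    refine ⟨q, -p, ?_, ?_⟩
    · rintro ⟨-, h⟩; exact hp0 (neg_eq_zero.1 h)
    · have h0 : (q : ℝ) * a + ((-p : ℤ) : ℝ) * c = 0 := by
        rw [← hp, ← hq]; push_cast [zsmul_eq_mul]; ring
      rw [h0]; simpa using hε

lemma lat_small (M : Matrix.SpecialLinearGroup (Fin 2) ℝ) (ε : ℝ) (hε : 0 < ε) :
    ∃ q ∈ lat M, q ≠ 0 ∧ |q.1| < ε := by
  obtain ⟨m, n, hmn, hsmall⟩ := exists_small_comb (M.1 0 0) (M.1 1 0) ε hε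
  refine ⟨((m : ℝ) * M.1 0 0 + (n : ℝ) * M.1 1 0,
           (m : ℝ) * M.1 0 1 + (n : ℝ) * M.1 1 1), ⟨m, n, rfl⟩, ?_, hsmall⟩
  intro h
  rw [Prod.ext_iff] at h
  have h1 : (m : ℝ) * M.1 0 0 + (n : ℝ) * M.1 1 0 = 0 := h.1
  have h2 : (m : ℝ) * M.1 0 1 + (n : ℝ) * M.1 1 1 = 0 := h.2
  have hdet : M.1 0 0 * M.1 1 1 - M.1 0 1 * M.1 1 0 = 1 := by
    have := M.2
    rw [Matrix.det_fin_two] at this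
    linarith
  have hm : (m : ℝ) = 0 := by
    linear_combination (M.1 1 1) * h1 - (M.1 1 0) * h2 - (m : ℝ) * hdet
  have hn : (n : ℝ) = 0 := by
    linear_combination (M.1 0 0) * h2 - (M.1 0 1) * h1 - (n : ℝ) * hdet
  exact hmn ⟨by exact_mod_cast hm, by exact_mod_cast hn⟩

lemma lat_neg (M : Matrix.SpecialLinearGroup (Fin 2) ℝ) {q : ℝ × ℝ} (hq : q ∈ lat M) :
    -q ∈ lat M := by
  obtain ⟨m, n, rfl⟩ := hq
  exact ⟨-m, -n, by push_cast; simp [Prod.ext_iff]; constructor <;> ring⟩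

lemma lat_add (M : Matrix.SpecialLinearGroup (Fin 2) ℝ) {p q : ℝ × ℝ}
    (hp : p ∈ lat M) (hq : q ∈ lat M) : p + q ∈ lat M := by
  obtain ⟨m, n, rfl⟩ := hp
  obtain ⟨m', n', rfl⟩ := hq
  exact ⟨m + m', n + n', by push_cast; simp [Prod.ext_iff]; constructor <;> ring⟩

lemma r1_eq_zero (M : Matrix.SpecialLinearGroup (Fin 2) ℝ)
    (r : ℝ × ℝ)
    (hr : r ∈ regA ∩ lat M)
    (hall : ∀ p ∈ regA ∩ lat M, ∃ k : ℤ, p = k • r) :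
    r.1 = 0 := by
  by_contra h1
  have hr1 : |r.1| < 1 := abs_lt.2 ⟨hr.1.1.1, hr.1.1.2⟩
  have hr2 : 0 < r.2 := hr.1.2
  set ε := min |r.1| (1 - |r.1|) with hεdef
  have hε : 0 < ε := lt_min (abs_pos.2 h1) (by linarith)
  obtain ⟨q, hqlat, hq0, hqsmall⟩ := lat_small M ε hε
  -- reduce to the case 0 ≤ q.2
  have key : ∀ q : ℝ × ℝ, q ∈ lat M → q ≠ 0 → |q.1| < ε → 0 ≤ q.2 → False := by
    intro q hqlat hq0 hqsmall hq2
    rcases eq_or_lt_of_le hq2 with hq2 | hq2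
    · -- q.2 = 0 : consider r + q
      have hp : r + q ∈ regA ∩ lat M := by
        refine ⟨⟨?_, ?_⟩, lat_add M hr.2 hqlat⟩
        · have : |(r + q).1| < 1 := by
            have : |r.1 + q.1| ≤ |r.1| + |q.1| := abs_add_le _ _
            have hq1 : |q.1| < 1 - |r.1| := lt_of_lt_of_le hqsmall (min_le_right _ _)
            calc |(r+q).1| = |r.1 + q.1| := rfl
              _ < 1 := by linarith
          exact abs_lt.1 this
        · show 0 < (r + q).2
          have : (r + q).2 = r.2 + q.2 := rfl
          rw [this, ← hq2]; simpa using hr2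
      obtain ⟨k, hk⟩ := hall _ hp
      have hk2 : r.2 + q.2 = (k : ℝ) * r.2 := by
        have := congrArg Prod.snd hk
        simpa [Prod.smul_snd, zsmul_eq_mul] using this
      rw [← hq2, add_zero] at hk2
      have hk1 : (k : ℝ) = 1 := by
        have h' : ((k : ℝ) - 1) * r.2 = 0 := by linear_combination -hk2
        rcases mul_eq_zero.1 h' with h | h
        · linarith
        · exact absurd h (ne_of_gt hr2)
      have hq1 : r.1 + q.1 = (k : ℝ) * r.1 := by
        have := congrArg Prod.fst hk
        simpa [Prod.smul_fst, zsmul_eq_mul] using this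
      rw [hk1, one_mul] at hq1
      have : q.1 = 0 := by linarith
      exact hq0 (Prod.ext this hq2.symm)
    · -- q.2 > 0 : q itself is in A
      have hq1lt : |q.1| < 1 := lt_of_lt_of_le hqsmall (le_trans (min_le_left _ _) hr1.le)
      have hqA : q ∈ regA ∩ lat M := ⟨⟨abs_lt.1 hq1lt, hq2⟩, hqlat⟩
      obtain ⟨k, hk⟩ := hall _ hqA
      have hk2 : q.2 = (k : ℝ) * r.2 := by
        have := congrArg Prod.snd hk
        simpa [Prod.smul_snd, zsmul_eq_mul] using this
      have hkpos : 0 < k := by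
        by_contra hkn
        push_neg at hkn
        have : (k : ℝ) ≤ 0 := by exact_mod_cast hkn
        nlinarith
      have hk1 : (1 : ℝ) ≤ (k : ℝ) := by exact_mod_cast hkpos
      have hq1 : q.1 = (k : ℝ) * r.1 := by
        have := congrArg Prod.fst hk
        simpa [Prod.smul_fst, zsmul_eq_mul] using this
      have : |r.1| ≤ |q.1| := by
        rw [hq1, abs_mul]
        nlinarith [abs_nonneg r.1, abs_of_pos (lt_of_lt_of_le one_pos hk1)]
      have : ε ≤ |q.1| := le_trans (min_le_left _ _) this
      linarith
  rcases le_or_gt 0 q.2 with h | h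
  · exact key q hqlat hq0 hqsmall h
  · refine key (-q) (lat_neg M hqlat) (by simpa using hq0) (by simpa using hqsmall) ?_
    simp [le_of_lt (neg_pos.2 h)]

/-- If all points of A ∩ ℤ²M lie on ℤr, then F(M,t) = r₂ for all t ∈ (0,1]. -/
theorem F_const_of_all_on_line (M : Matrix.SpecialLinearGroup (Fin 2) ℝ)
    (r : ℝ × ℝ)
    (hr : r ∈ regA ∩ lat M)
    (hrmin : ∀ p ∈ regA ∩ lat M, r.2 ≤ p.2)
    (hall : ∀ p ∈ regA ∩ lat M, ∃ k : ℤ, p = k • r) :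
    ∀ t : ℝ, 0 < t → t ≤ 1 → F M t = r.2 := by
  intro t ht ht1
  have hr1 : r.1 = 0 := r1_eq_zero M r hr hall
  have hr2 : 0 < r.2 := hr.1.2
  have hmem : r.2 ∈ Fset M t := by
    refine ⟨hr2, 0, ?_, by linarith, by linarith⟩
    have h0 : ((0:ℝ), r.2) = r := by rw [← hr1]
    rw [h0]; exact hr.2
  have hlb : ∀ y ∈ Fset M t, r.2 ≤ y := by
    rintro y ⟨hy, x, hxlat, hx1, hx2⟩
    exact hrmin (x, y) ⟨⟨⟨by linarith, by linarith⟩, hy⟩, hxlat⟩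
  exact le_antisymm (csInf_le ⟨r.2, hlb⟩ hmem) (le_csInf ⟨r.2, hmem⟩ hlb)
end
end

section
/- Let M ∈ SL(2,ℝ), A = (-1,1) × (0,∞), and suppose the minimal second coordinate r₂ of points in A ∩ ℤ²M is attained by at least two points not on a common line through the origin. Choose r = (r₁, r₂) ∈ A ∩ ℤ²M with r₁ ≥ 0 minimal, and s = (s₁, r₂) ∈ A ∩ ℤ²M with s₁ < 0 maximal. Then F(M,t) = r₂ for t ∈ (0, 1-r₁] ∪ (-s₁, 1], and F(M,t) = 2r₂ for all other t ∈ (0,1]. -/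
open Matrix Set

noncomputable section

/-- The degenerate case s₂ = r₂ of the three gap analysis. -/
theorem F_formula_degenerate (M : Matrix.SpecialLinearGroup (Fin 2) ℝ)
    (r s : ℝ × ℝ)
    (hr : r ∈ regA ∩ lat M)
    (hs : s ∈ regA ∩ lat M)
    (heq : s.2 = r.2)
    (hrmin : ∀ p ∈ regA ∩ lat M, r.2 ≤ p.2)
    (hr1 : 0 ≤ r.1)
    (hr1min : ∀ p ∈ regA ∩ lat M, p.2 = r.2 → 0 ≤ p.1 → r.1 ≤ p.1)
    (hs1 : s.1 < 0)
    (hs1max : ∀ p ∈ regA ∩ lat M, p.2 = r.2 → p.1 < 0 → p.1 ≤ s.1) :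
    ∀ t : ℝ, 0 < t → t ≤ 1 →
      ((t ∈ Set.Ioc (0 : ℝ) (1 - r.1) ∪ Set.Ioc (-s.1) 1 → F M t = r.2) ∧
       (t ∉ Set.Ioc (0 : ℝ) (1 - r.1) ∪ Set.Ioc (-s.1) 1 → F M t = 2 * r.2)) := by
  obtain ⟨hrA, hrL⟩ := hr
  obtain ⟨hsA, hsL⟩ := hs
  have hr11 : -1 < r.1 := hrA.1.1
  have hr12 : r.1 < 1 := hrA.1.2
  have hr2 : (0:ℝ) < r.2 := hrA.2
  have hs11 : -1 < s.1 := hsA.1.1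
  -- closure of the lattice under addition and subtraction
  have latsub : ∀ p q : ℝ × ℝ, p ∈ lat M → q ∈ lat M →
      (p.1 - q.1, p.2 - q.2) ∈ lat M := by
    rintro p q ⟨m, n, hp⟩ ⟨m', n', hq⟩
    refine ⟨m - m', n - n', ?_⟩
    rw [hp, hq]
    push_cast
    simp only [Prod.mk.injEq]
    constructor <;> ring
  have latadd : ∀ p q : ℝ × ℝ, p ∈ lat M → q ∈ lat M →
      (p.1 + q.1, p.2 + q.2) ∈ lat M := by
    rintro p q ⟨m, n, hp⟩ ⟨m', n', hq⟩
    refine ⟨m + m', n + n', ?_⟩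
    rw [hp, hq]
    push_cast
    simp only [Prod.mk.injEq]
    constructor <;> ring
  -- the gap lemma: no lattice point in A with height strictly between r₂ and 2r₂
  have hgap : ∀ x y : ℝ, (x, y) ∈ lat M → -1 < x → x < 1 → r.2 < y → 2 * r.2 ≤ y := by
    intro x y hxy hx1 hx2 hy
    by_contra h
    push_neg at h
    by_cases hc : -1 < x - r.1
    · have hmem : (x - r.1, y - r.2) ∈ regA ∩ lat M := by
        refine ⟨⟨⟨hc, by show x - r.1 < 1; linarith⟩,
          by simpa using (by linarith : (0:ℝ) < y - r.2)⟩, ?_⟩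
        have := latsub (x, y) r hxy hrL
        simpa using this
      have := hrmin _ hmem
      simp only at this
      linarith
    · push_neg at hc
      have hmem : (x - s.1, y - r.2) ∈ regA ∩ lat M := by
        refine ⟨⟨⟨by show (-1:ℝ) < x - s.1; linarith, by show x - s.1 < 1; linarith⟩,
          by simpa using (by linarith : (0:ℝ) < y - r.2)⟩, ?_⟩
        have := latsub (x, y) s hxy hsL
        rw [heq] at this
        simpa using this
      have := hrmin _ hmem
      simp only at this
      linarith
  intro t ht0 ht1
  -- general lower bound: every element of Fset is ≥ r₂
  have hlb : ∀ y ∈ Fset M t, r.2 ≤ y := by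
    rintro y ⟨hy, x, hxy, hx1, hx2⟩
    exact hrmin (x, y) ⟨⟨⟨by linarith, by linarith⟩, hy⟩, hxy⟩
  constructor
  · rintro (⟨-, htr⟩ | ⟨hts, -⟩)
    · -- use r itself
      have hmem : r.2 ∈ Fset M t := by
        refine ⟨hr2, r.1, ?_, by linarith, by linarith⟩
        rw [Prod.mk.eta]; exact hrL
      exact le_antisymm (csInf_le ⟨r.2, hlb⟩ hmem) (le_csInf ⟨r.2, hmem⟩ hlb)
    · -- use s
      have hmem : r.2 ∈ Fset M t := by
        refine ⟨hr2, s.1, ?_, by linarith, by linarith⟩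
        rw [← heq, Prod.mk.eta]; exact hsL
      exact le_antisymm (csInf_le ⟨r.2, hlb⟩ hmem) (le_csInf ⟨r.2, hmem⟩ hlb)
  · intro hnot
    simp only [Set.mem_union, Set.mem_Ioc, not_or, not_and, not_le] at hnot
    have h1 : 1 - r.1 < t := hnot.1 ht0
    have h2 : t ≤ -s.1 := by
      by_contra hcon
      push_neg at hcon
      exact absurd ht1 (not_le.mpr (hnot.2 hcon))
    -- membership of 2r₂ via r + s
    have hmem : 2 * r.2 ∈ Fset M t := by
      refine ⟨by linarith, r.1 + s.1, ?_, by linarith, by linarith⟩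
      have h := latadd r s hrL hsL
      rw [heq] at h
      rw [two_mul]
      exact h
    -- lower bound 2r₂
    have hlb2 : ∀ y ∈ Fset M t, 2 * r.2 ≤ y := by
      rintro y ⟨hy, x, hxy, hx1, hx2⟩
      have hxA : (x, y) ∈ regA ∩ lat M := ⟨⟨⟨by linarith, by linarith⟩, hy⟩, hxy⟩
      have hyr : r.2 ≤ y := hrmin _ hxA
      rcases eq_or_lt_of_le hyr with hE | hL
      · -- y = r₂: contradiction with being in the bad interval
        exfalso
        rcases le_or_gt 0 x with hx0 | hx0
        · have := hr1min (x, y) hxA hE.symm hx0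
          simp only at this
          linarith
        · have := hs1max (x, y) hxA hE.symm hx0
          simp only at this
          linarith
      · exact hgap x y hxy (by linarith) (by linarith) hL
    exact le_antisymm (csInf_le ⟨2 * r.2, hlb2⟩ hmem) (le_csInf ⟨2 * r.2, hmem⟩ hlb2)
end
end

section
/- Let α ∈ ℝ, N a positive integer, and define A_N = [[1, α],[0,1]] · [[1/N, 0],[0, N]] ∈ SL(2,ℝ). Then for each 1 ≤ k ≤ N, the gap s_{k,N} from {kα} to its next neighbor among {α},...,{Nα} on ℝ/ℤ satisfies s_{k,N} = (1/N) F(A_N, k/N). -/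
open Matrix Set Pointwise

noncomputable section

/-- The rescaling identity s_{k,N} = (1/N) F(A_N, k/N). -/
theorem gap_eq_F (α : ℝ) (N : ℤ) (hN : 0 < N) (k : ℤ) (hk1 : 1 ≤ k) (hkN : k ≤ N)
    (A : Matrix.SpecialLinearGroup (Fin 2) ℝ)
    (hA : A.1 = !![(1 : ℝ), α; 0, 1] * !![((N : ℝ))⁻¹, 0; 0, (N : ℝ)]) :
    gap α N k = (1 / (N : ℝ)) * F A ((k : ℝ) / (N : ℝ)) := by
  have hN0 : (0:ℝ) < (N:ℝ) := by exact_mod_cast hN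
  have hA' : A.1 = !![((N:ℝ))⁻¹, α * N; 0, (N:ℝ)] := by
    rw [hA, Matrix.mul_fin_two]; norm_num
  have e00 : A.1 0 0 = ((N:ℝ))⁻¹ := by rw [hA']; simp
  have e01 : A.1 0 1 = α * N := by rw [hA']; simp
  have e10 : A.1 1 0 = 0 := by rw [hA']; simp
  have e11 : A.1 1 1 = (N:ℝ) := by rw [hA']; simp
  have hset : Fset A ((k:ℝ)/(N:ℝ)) = (N:ℝ) • gapSet α N k := by
    ext y
    constructor
    · rintro ⟨hy, x, ⟨m, n, hp⟩, hx1, hx2⟩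
      rw [e00, e01, e10, e11] at hp
      rw [Prod.ext_iff] at hp
      obtain ⟨hx, hyeq⟩ := hp
      simp only at hx hyeq
      have hyv : y = (N:ℝ) * ((m:ℝ) * α + (n:ℝ)) := by rw [hyeq]; ring
      have hv : 0 < (m:ℝ) * α + (n:ℝ) := by
        by_contra h
        push_neg at h
        nlinarith [hy]
      rw [hx] at hx1 hx2
      have h1 : -((k:ℝ)/N) * N = -(k:ℝ) := by field_simp
      have h2 : ((m:ℝ) * (N:ℝ)⁻¹ + (n:ℝ) * 0) * N = (m:ℝ) := by field_simp; ring
      have h3 : (1 - (k:ℝ)/N) * N = (N:ℝ) - (k:ℝ) := by field_simp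
      have hm1 : -k < m := by
        have h' := mul_lt_mul_of_pos_right hx1 hN0
        rw [h1, h2] at h'
        exact_mod_cast h'
      have hm2 : m ≤ N - k := by
        have h' := mul_le_mul_of_nonneg_right hx2 hN0.le
        rw [h2, h3] at h'
        exact_mod_cast h'
      refine ⟨(m:ℝ) * α + (n:ℝ), ⟨hv, m + k, n, by omega, by omega, by push_cast; ring⟩, ?_⟩
      simp [smul_eq_mul, hyv]
    · rintro ⟨v, ⟨hv, l, n, hl1, hl2, hveq⟩, hy⟩
      simp only [smul_eq_mul] at hy
      refine ⟨?_, ((l:ℝ) - (k:ℝ)) * (N:ℝ)⁻¹, ⟨l - k, n, ?_⟩, ?_, ?_⟩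
      · rw [← hy]; positivity
      · rw [e00, e01, e10, e11, ← hy, hveq, Prod.ext_iff]
        constructor
        · push_cast; ring_nf
        · push_cast; ring_nf
      · have hlk : -(k:ℝ) < (l:ℝ) - (k:ℝ) := by
          have : (0:ℝ) < (l:ℝ) := by exact_mod_cast hl1
          linarith
        calc -((k:ℝ)/N) = -(k:ℝ) * (N:ℝ)⁻¹ := by ring
        _ < ((l:ℝ) - (k:ℝ)) * (N:ℝ)⁻¹ := mul_lt_mul_of_pos_right hlk (inv_pos.mpr hN0)
      · have hlk : (l:ℝ) - (k:ℝ) ≤ (N:ℝ) - (k:ℝ) := by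
          have : (l:ℝ) ≤ (N:ℝ) := by exact_mod_cast hl2
          linarith
        calc ((l:ℝ) - (k:ℝ)) * (N:ℝ)⁻¹ ≤ ((N:ℝ) - (k:ℝ)) * (N:ℝ)⁻¹ :=
              mul_le_mul_of_nonneg_right hlk (inv_nonneg.mpr hN0.le)
        _ = 1 - (k:ℝ) / N := by field_simp
  have : F A ((k:ℝ)/(N:ℝ)) = (N:ℝ) * gap α N k := by
    rw [F, hset, Real.sInf_smul_of_nonneg hN0.le, smul_eq_mul, gap]
  rw [this]
  field_simp
end
end

section
/- Let L be a lattice in ℝ² with basis vectors r = (r₁,r₂) and s = (s₁,s₂), where r₂, s₂ > 0, |r₁| < 1, |s₁| < 1, and r₁s₁ < 0. For t ∈ (0,1], the minimum min{ y > 0 : (x,y) ∈ L, -t < x ≤ 1-t } is attained at one of the points r, s, or r + s. -/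
open Matrix Set

noncomputable section

private lemma pair_eqc {p r s : ℝ×ℝ} {m n : ℤ} (h : p = m•r+n•s) :
    p.1 = m*r.1+n*s.1 ∧ p.2 = m*r.2+n*s.2 := by
  rw [h]; constructor <;> simp [zsmul_eq_mul]

private lemma pair_memc (r s : ℝ×ℝ) (m n : ℤ) (x y : ℝ)
    (hx : x = m*r.1+n*s.1) (hy : y = m*r.2+n*s.2) :
    ∃ m n : ℤ, ((x,y) : ℝ×ℝ) = m•r+n•s :=
  ⟨m, n, by apply Prod.ext <;> simp [hx, hy, zsmul_eq_mul]⟩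

private lemma mul_eqc {x y : ℝ} {k : ℤ} {r : ℝ×ℝ} (h : ((x,y):ℝ×ℝ) = k•r) :
    x = k*r.1 ∧ y = k*r.2 := by
  rw [Prod.ext_iff] at h; simpa [zsmul_eq_mul] using h

private lemma pair_mulc {x y : ℝ} {k : ℤ} {r : ℝ×ℝ} (hx : x = k*r.1) (hy : y = k*r.2) :
    ((x,y):ℝ×ℝ) = k•r := by
  apply Prod.ext <;> simp [zsmul_eq_mul, hx, hy]

private lemma memAc {x y : ℝ} (h1 : -1 < x) (h2 : x < 1) (h3 : 0 < y) : (x,y) ∈ regA := by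
  simp only [regA, Set.mem_prod, Set.mem_Ioo, Set.mem_Ioi]
  exact ⟨⟨h1,h2⟩,h3⟩

/-- The minimum is attained at one of r, s or r + s. -/
theorem min_attained_at_basis (r s : ℝ × ℝ)
    (hr2 : 0 < r.2) (hs2 : 0 < s.2)
    (hr1 : |r.1| < 1) (hs1 : |s.1| < 1) (hsign : r.1 * s.1 < 0)
    (hrmin : ∀ p ∈ regA ∩ {p : ℝ × ℝ | ∃ m n : ℤ, p = m • r + n • s}, r.2 ≤ p.2)
    (hsmin : ∀ p ∈ regA ∩ {p : ℝ × ℝ | ∃ m n : ℤ, p = m • r + n • s},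
        (∀ k : ℤ, p ≠ k • r) → s.2 ≤ p.2)
    (hlt : r.2 < s.2)
    (t : ℝ) (ht : 0 < t) (ht1 : t ≤ 1) :
    ∃ p : ℝ × ℝ, (p = r ∨ p = s ∨ p = r + s) ∧
      IsLeast { y : ℝ | 0 < y ∧ ∃ x : ℝ,
          (x, y) ∈ {p : ℝ × ℝ | ∃ m n : ℤ, p = m • r + n • s} ∧
          -t < x ∧ x ≤ 1 - t } p.2 := by
  have hr1l : -1 < r.1 := neg_lt_of_abs_lt hr1
  have hr1u : r.1 < 1 := lt_of_abs_lt hr1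
  have hs1l : -1 < s.1 := neg_lt_of_abs_lt hs1
  have hs1u : s.1 < 1 := lt_of_abs_lt hs1
  -- a multiple k•r = (x,y) lying in the strip forces k ≥ 1 (as a real)
  have hkge : ∀ (k : ℤ) (x y : ℝ), ((x,y):ℝ×ℝ) = k•r → 0 < y → (1:ℝ) ≤ (k:ℝ) := by
    intro k x y hk hy
    obtain ⟨_, hy2⟩ := mul_eqc hk
    have hkpos : (0:ℝ) < (k:ℝ) := by nlinarith
    have : 0 < k := by exact_mod_cast hkpos
    exact_mod_cast this
  by_cases hrstrip : -t < r.1 ∧ r.1 ≤ 1 - t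
  · refine ⟨r, Or.inl rfl, ⟨hr2, r.1, pair_memc r s 1 0 r.1 r.2 (by push_cast; ring)
      (by push_cast; ring), hrstrip.1, hrstrip.2⟩, ?_⟩
    rintro y ⟨hy0, x, ⟨m, n, hmn⟩, hx1, hx2⟩
    exact hrmin (x,y) ⟨memAc (by linarith) (by linarith) hy0, m, n, hmn⟩
  · -- r is not in the strip
    rcases lt_or_gt_of_ne (fun h : r.1 = 0 => by rw [h] at hsign; simp at hsign) with hrneg | hrpos
    · -- r.1 < 0 hence s.1 > 0, and r.1 ≤ -t
      have hspos : 0 < s.1 := by nlinarith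
      have hrle : r.1 ≤ -t := by
        by_contra h; push_neg at h; exact hrstrip ⟨h, by linarith⟩
      -- no multiple of r in the strip
      have hnomul : ∀ (k : ℤ) (x y : ℝ), ((x,y):ℝ×ℝ) = k•r → 0 < y → -t < x → x ≤ 1-t → False := by
        intro k x y hk hy hx1 hx2
        have hk1 := hkge k x y hk hy
        obtain ⟨hx, _⟩ := mul_eqc hk
        nlinarith
      by_cases hsin : s.1 ≤ 1 - t
      · -- answer is s
        refine ⟨s, Or.inr (Or.inl rfl), ⟨hs2, s.1, pair_memc r s 0 1 s.1 s.2 (by push_cast; ring)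
          (by push_cast; ring), by linarith, hsin⟩, ?_⟩
        rintro y ⟨hy0, x, ⟨m, n, hmn⟩, hx1, hx2⟩
        refine hsmin (x,y) ⟨memAc (by linarith) (by linarith) hy0, m, n, hmn⟩ ?_
        intro k hk; exact hnomul k x y hk hy0 hx1 hx2
      · -- s.1 > 1 - t : answer is r + s
        push_neg at hsin
        refine ⟨r + s, Or.inr (Or.inr rfl), ?_⟩
        have hrs2 : (r+s).2 = r.2 + s.2 := Prod.snd_add ..
        constructor
        · refine ⟨by rw [hrs2]; linarith, r.1 + s.1,
            pair_memc r s 1 1 _ _ (by push_cast [Prod.fst_add]; ring)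
              (by push_cast [Prod.snd_add]; ring),
            by linarith, by linarith⟩
        · rintro y ⟨hy0, x, ⟨m, n, hmn⟩, hx1, hx2⟩
          rw [hrs2]
          by_contra hcon; push_neg at hcon
          obtain ⟨hx, hy⟩ := pair_eqc hmn
          have hnm : ∀ k:ℤ, ((x,y):ℝ×ℝ) ≠ k•r := fun k hk => hnomul k x y hk hy0 hx1 hx2
          have hys : s.2 ≤ y :=
            hsmin (x,y) ⟨memAc (by linarith) (by linarith) hy0, m, n, hmn⟩ hnm
          by_cases hxc : x < r.1 + 1
          · -- consider q = p - r
            have hqL : ∃ m n : ℤ, ((x - r.1, y - r.2):ℝ×ℝ) = m•r+n•s :=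
              pair_memc r s (m-1) n _ _ (by push_cast; linarith) (by push_cast; linarith)
            have hqA : ((x - r.1, y - r.2):ℝ×ℝ) ∈ regA :=
              memAc (by linarith) (by linarith) (by linarith)
            have hq2 : s.2 ≤ y - r.2 := by
              refine hsmin _ ⟨hqA, hqL⟩ ?_
              intro k hk
              obtain ⟨hk1, hk2⟩ := mul_eqc hk
              exact hnm (k+1) (pair_mulc (by push_cast; linear_combination hk1)
                (by push_cast; linear_combination hk2))
            linarith
          · -- x ≥ r.1 + 1 : consider q = p - s
            push_neg at hxc
            have hq1l : r.1 < x - s.1 := by linarith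
            have hq1u : x - s.1 < 0 := by linarith
            have hqL : ∃ m n : ℤ, ((x - s.1, y - s.2):ℝ×ℝ) = m•r+n•s :=
              pair_memc r s m (n-1) _ _ (by push_cast; linarith) (by push_cast; linarith)
            rcases lt_or_eq_of_le hys with hlt2 | heq
            · -- y - s.2 > 0 : contradicts minimality of r.2
              have h := hrmin ((x - s.1, y - s.2) : ℝ×ℝ) ⟨memAc
                (by linarith) (by linarith) (by linarith), hqL⟩
              have h' : r.2 ≤ y - s.2 := h
              linarith
            · -- y = s.2 : consider w = r - q
              obtain ⟨m', n', hq⟩ := hqL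
              obtain ⟨hq1, hq2⟩ := pair_eqc hq
              have hq1' : x - s.1 = (m':ℝ)*r.1+(n':ℝ)*s.1 := hq1
              have hq2' : y - s.2 = (m':ℝ)*r.2+(n':ℝ)*s.2 := hq2
              have h0 : (m':ℝ)*r.2 + (n':ℝ)*s.2 = 0 := by linarith
              have hwL : ∃ m n : ℤ, ((r.1 - (x - s.1), r.2):ℝ×ℝ) = m•r+n•s :=
                pair_memc r s (1-m') (-n') _ _ (by push_cast; linarith)
                  (by push_cast; linear_combination h0)
              have hwA : ((r.1 - (x - s.1), r.2):ℝ×ℝ) ∈ regA :=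
                memAc (by linarith) (by linarith) hr2
              have hw2 : s.2 ≤ ((r.1 - (x - s.1), r.2) : ℝ×ℝ).2 := by
                refine hsmin _ ⟨hwA, hwL⟩ ?_
                intro k hk
                obtain ⟨hk1, hk2⟩ := mul_eqc hk
                have h0 : ((k:ℝ)-1)*r.2 = 0 := by linear_combination -hk2
                have hk1' : (k:ℝ) = 1 := by
                  rcases mul_eq_zero.mp h0 with h | h
                  · linarith
                  · exact absurd h (ne_of_gt hr2)
                rw [hk1'] at hk1; linarith
              have hw2' : s.2 ≤ r.2 := hw2
              linarith
    · -- r.1 > 0 hence s.1 < 0, and r.1 > 1 - t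
      have hsneg : s.1 < 0 := by nlinarith
      have hrgt : 1 - t < r.1 := by
        by_contra h; push_neg at h; exact hrstrip ⟨by linarith, h⟩
      have hnomul : ∀ (k : ℤ) (x y : ℝ), ((x,y):ℝ×ℝ) = k•r → 0 < y → -t < x → x ≤ 1-t → False := by
        intro k x y hk hy hx1 hx2
        have hk1 := hkge k x y hk hy
        obtain ⟨hx, _⟩ := mul_eqc hk
        nlinarith
      by_cases hsin : -t < s.1
      · refine ⟨s, Or.inr (Or.inl rfl), ⟨hs2, s.1, pair_memc r s 0 1 s.1 s.2 (by push_cast; ring)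
          (by push_cast; ring), hsin, by linarith⟩, ?_⟩
        rintro y ⟨hy0, x, ⟨m, n, hmn⟩, hx1, hx2⟩
        refine hsmin (x,y) ⟨memAc (by linarith) (by linarith) hy0, m, n, hmn⟩ ?_
        intro k hk; exact hnomul k x y hk hy0 hx1 hx2
      · -- s.1 ≤ -t : answer is r + s
        push_neg at hsin
        refine ⟨r + s, Or.inr (Or.inr rfl), ?_⟩
        have hrs2 : (r+s).2 = r.2 + s.2 := Prod.snd_add ..
        constructor
        · refine ⟨by rw [hrs2]; linarith, r.1 + s.1,
            pair_memc r s 1 1 _ _ (by push_cast [Prod.fst_add]; ring)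
              (by push_cast [Prod.snd_add]; ring),
            by linarith, by linarith⟩
        · rintro y ⟨hy0, x, ⟨m, n, hmn⟩, hx1, hx2⟩
          rw [hrs2]
          by_contra hcon; push_neg at hcon
          obtain ⟨hx, hy⟩ := pair_eqc hmn
          have hnm : ∀ k:ℤ, ((x,y):ℝ×ℝ) ≠ k•r := fun k hk => hnomul k x y hk hy0 hx1 hx2
          have hys : s.2 ≤ y :=
            hsmin (x,y) ⟨memAc (by linarith) (by linarith) hy0, m, n, hmn⟩ hnm
          by_cases hxc : r.1 - 1 < x
          · -- consider q = p - r
            have hqL : ∃ m n : ℤ, ((x - r.1, y - r.2):ℝ×ℝ) = m•r+n•s :=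
              pair_memc r s (m-1) n _ _ (by push_cast; linarith) (by push_cast; linarith)
            have hqA : ((x - r.1, y - r.2):ℝ×ℝ) ∈ regA :=
              memAc (by linarith) (by linarith) (by linarith)
            have hq2 : s.2 ≤ y - r.2 := by
              refine hsmin _ ⟨hqA, hqL⟩ ?_
              intro k hk
              obtain ⟨hk1, hk2⟩ := mul_eqc hk
              exact hnm (k+1) (pair_mulc (by push_cast; linear_combination hk1)
                (by push_cast; linear_combination hk2))
            linarith
          · -- x ≤ r.1 - 1 : consider q = p - s
            push_neg at hxc
            have hq1l : 0 < x - s.1 := by linarith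
            have hq1u : x - s.1 < r.1 := by linarith
            have hqL : ∃ m n : ℤ, ((x - s.1, y - s.2):ℝ×ℝ) = m•r+n•s :=
              pair_memc r s m (n-1) _ _ (by push_cast; linarith) (by push_cast; linarith)
            rcases lt_or_eq_of_le hys with hlt2 | heq
            · have h := hrmin ((x - s.1, y - s.2) : ℝ×ℝ) ⟨memAc
                (by linarith) (by linarith) (by linarith), hqL⟩
              have h' : r.2 ≤ y - s.2 := h
              linarith
            · obtain ⟨m', n', hq⟩ := hqL
              obtain ⟨hq1, hq2⟩ := pair_eqc hq
              have hq1' : x - s.1 = (m':ℝ)*r.1+(n':ℝ)*s.1 := hq1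
              have hq2' : y - s.2 = (m':ℝ)*r.2+(n':ℝ)*s.2 := hq2
              have h0 : (m':ℝ)*r.2 + (n':ℝ)*s.2 = 0 := by linarith
              have hwL : ∃ m n : ℤ, ((r.1 - (x - s.1), r.2):ℝ×ℝ) = m•r+n•s :=
                pair_memc r s (1-m') (-n') _ _ (by push_cast; linarith)
                  (by push_cast; linear_combination h0)
              have hwA : ((r.1 - (x - s.1), r.2):ℝ×ℝ) ∈ regA :=
                memAc (by linarith) (by linarith) hr2
              have hw2 : s.2 ≤ ((r.1 - (x - s.1), r.2) : ℝ×ℝ).2 := by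
                refine hsmin _ ⟨hwA, hwL⟩ ?_
                intro k hk
                obtain ⟨hk1, hk2⟩ := mul_eqc hk
                have h0 : ((k:ℝ)-1)*r.2 = 0 := by linear_combination -hk2
                have hk1' : (k:ℝ) = 1 := by
                  rcases mul_eq_zero.mp h0 with h | h
                  · linarith
                  · exact absurd h (ne_of_gt hr2)
                rw [hk1'] at hk1; linarith
              have hw2' : s.2 ≤ r.2 := hw2
              linarith
end
end

section
/- For any real α and positive integer N, if the gaps of {α}, {2α}, ..., {Nα} on ℝ/ℤ take exactly three distinct lengths, then the largest length equals the sum of the two smaller lengths. -/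
open Matrix Set

noncomputable section

/-- least positive element of jα + ℤ -/
noncomputable def vv (α : ℝ) (j : ℤ) : ℝ := 1 - Int.fract (-(j * α))

lemma vv_pos (α : ℝ) (j : ℤ) : 0 < vv α j := by
  have := Int.fract_lt_one (-(j * α)); unfold vv; linarith

lemma vv_le_one (α : ℝ) (j : ℤ) : vv α j ≤ 1 := by
  have := Int.fract_nonneg (-(j * α)); unfold vv; linarith

lemma vv_mem (α : ℝ) (j : ℤ) : ∃ n : ℤ, vv α j = (j : ℝ) * α + (n : ℝ) := by
  refine ⟨⌊-((j:ℝ) * α)⌋ + 1, ?_⟩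
  unfold vv Int.fract
  simp only [Int.cast_add, Int.cast_one]
  ring

lemma vv_min (α : ℝ) (j : ℤ) (n : ℤ) (h : 0 < (j:ℝ) * α + (n:ℝ)) :
    vv α j ≤ (j:ℝ) * α + (n:ℝ) := by
  unfold vv Int.fract
  have h1 : (⌊-((j:ℝ)*α)⌋ : ℝ) ≤ -((j:ℝ)*α) := Int.floor_le _
  have h2 : ⌊-((j:ℝ)*α)⌋ < n := by
    apply Int.floor_lt.mpr; linarith
  have h3 : (⌊-((j:ℝ)*α)⌋ : ℝ) + 1 ≤ (n:ℝ) := by exact_mod_cast h2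
  linarith

lemma vv_min' (α : ℝ) (j : ℤ) (x : ℝ) (hx : 0 < x)
    (h : ∃ n : ℤ, x = (j:ℝ) * α + (n:ℝ)) : vv α j ≤ x := by
  obtain ⟨n, rfl⟩ := h
  exact vv_min α j n hx

lemma vv_zero (α : ℝ) : vv α 0 = 1 := by
  unfold vv; norm_num

lemma gap_spec (α : ℝ) (N k : ℤ) (hk1 : 1 ≤ k) (hk2 : k ≤ N) :
    (∃ j : ℤ, (1 - k ≤ j ∧ j ≤ N - k) ∧ gap α N k = vv α j) ∧
    (∀ j : ℤ, 1 - k ≤ j → j ≤ N - k → gap α N k ≤ vv α j) := by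
  classical
  set J : Finset ℤ := Finset.Icc (1 - k) (N - k) with hJdef
  have hJ : J.Nonempty := ⟨0, by simp [hJdef, Finset.mem_Icc]; omega⟩
  set m := J.inf' hJ (vv α) with hm
  have claim1 : ∀ j ∈ J, vv α j ∈ gapSet α N k := by
    intro j hj
    rw [hJdef, Finset.mem_Icc] at hj
    obtain ⟨n, hn⟩ := vv_mem α j
    refine ⟨vv_pos α j, j + k, n, by omega, by omega, ?_⟩
    rw [hn]; push_cast; ring
  have claim2 : ∀ x ∈ gapSet α N k, m ≤ x := by
    intro x hx
    obtain ⟨hxpos, l, n, hl1, hl2, hxeq⟩ := hx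
    have hj : l - k ∈ J := by rw [hJdef, Finset.mem_Icc]; omega
    have h1 : vv α (l - k) ≤ x := by
      apply vv_min' α (l-k) x hxpos
      exact ⟨n, by rw [hxeq]; push_cast; ring⟩
    exact le_trans (Finset.inf'_le _ hj) h1
  have hne : (gapSet α N k).Nonempty := by
    refine ⟨vv α 0, claim1 0 ?_⟩
    rw [hJdef, Finset.mem_Icc]; omega
  have hbdd : BddBelow (gapSet α N k) := ⟨0, fun x hx => hx.1.le⟩
  obtain ⟨j0, hj0, hj0eq⟩ := Finset.exists_mem_eq_inf' hJ (vv α)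
  have hgapm : gap α N k = m := by
    apply le_antisymm
    · calc gap α N k ≤ vv α j0 := csInf_le hbdd (claim1 j0 hj0)
      _ = m := hj0eq.symm
    · exact le_csInf hne claim2
  constructor
  · refine ⟨j0, ?_, by rw [hgapm]; exact hj0eq⟩
    rw [hJdef, Finset.mem_Icc] at hj0; exact hj0
  · intro j h1 h2
    rw [hgapm]
    exact Finset.inf'_le _ (by rw [hJdef, Finset.mem_Icc]; omega)

lemma gap_pos (α : ℝ) (N k : ℤ) (hk1 : 1 ≤ k) (hk2 : k ≤ N) : 0 < gap α N k := by
  obtain ⟨⟨j, _, hj⟩, _⟩ := gap_spec α N k hk1 hk2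
  rw [hj]; exact vv_pos α j

lemma vv_all_one (α : ℝ) (h : ∃ m : ℤ, α = (m : ℝ)) (i : ℤ) : vv α i = 1 := by
  obtain ⟨m, rfl⟩ := h
  unfold vv
  have : -((i:ℝ) * (m:ℝ)) = ((-(i*m) : ℤ) : ℝ) := by push_cast; ring
  rw [this, Int.fract_intCast]; ring

lemma vv_one_int (α : ℝ) (h : vv α 1 = 1) : ∃ m : ℤ, α = (m : ℝ) := by
  unfold vv Int.fract at h
  simp only [Int.cast_one, one_mul] at h
  exact ⟨-⌊-α⌋, by push_cast; linarith⟩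

lemma vv_negone_int (α : ℝ) (h : vv α (-1) = 1) : ∃ m : ℤ, α = (m : ℝ) := by
  unfold vv Int.fract at h
  simp only [Int.cast_neg, Int.cast_one, neg_mul, one_mul, neg_neg] at h
  exact ⟨⌊α⌋, by linarith⟩

lemma gap_trichotomy (α : ℝ) (N : ℤ) (hN : 0 < N) (k : ℤ) (hk1 : 1 ≤ k) (hk2 : k ≤ N) :
    gap α N k = gap α N 1 ∨ gap α N k = gap α N N ∨
      gap α N k = gap α N 1 + gap α N N := by
  classical
  obtain ⟨⟨jg1, hjg1b, hjg1⟩, h1le⟩ := gap_spec α N 1 le_rfl (by omega)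
  obtain ⟨⟨jgN, hjgNb, hjgN⟩, hNle⟩ := gap_spec α N N (by omega) le_rfl
  obtain ⟨⟨j, ⟨hjlo, hjhi⟩, hgk⟩, hkle⟩ := gap_spec α N k hk1 hk2
  set g1 := gap α N 1 with hg1def
  set gN := gap α N N with hgNdef
  have g1pos : 0 < g1 := gap_pos α N 1 le_rfl (by omega)
  have gNpos : 0 < gN := gap_pos α N N (by omega) le_rfl
  -- minimal index achieving g1
  have hT1 : ((Finset.Icc (0:ℤ) (N-1)).filter (fun i => vv α i = g1)).Nonempty := by
    refine ⟨jg1, ?_⟩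
    rw [Finset.mem_filter, Finset.mem_Icc]
    exact ⟨⟨by omega, by omega⟩, hjg1.symm⟩
  obtain ⟨j₁, hj₁mem, hj₁min'⟩ : ∃ x ∈ (Finset.Icc (0:ℤ) (N-1)).filter (fun i => vv α i = g1),
      ∀ i ∈ (Finset.Icc (0:ℤ) (N-1)).filter (fun i => vv α i = g1), x ≤ i :=
    ⟨_, Finset.min'_mem _ hT1, fun i hi => Finset.min'_le _ i hi⟩
  rw [Finset.mem_filter, Finset.mem_Icc] at hj₁mem
  obtain ⟨⟨hj₁0, hj₁N⟩, hj₁v⟩ := hj₁mem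
  have hj₁min : ∀ i : ℤ, 0 ≤ i → i ≤ N - 1 → vv α i = g1 → j₁ ≤ i := by
    intro i h1 h2 h3
    apply hj₁min'
    rw [Finset.mem_filter, Finset.mem_Icc]
    exact ⟨⟨h1, h2⟩, h3⟩
  -- maximal index achieving gN
  have hT2 : ((Finset.Icc (1-N) (0:ℤ)).filter (fun i => vv α i = gN)).Nonempty := by
    refine ⟨jgN, ?_⟩
    rw [Finset.mem_filter, Finset.mem_Icc]
    exact ⟨⟨by omega, by omega⟩, hjgN.symm⟩
  obtain ⟨j₂, hj₂mem, hj₂max'⟩ : ∃ x ∈ (Finset.Icc (1-N) (0:ℤ)).filter (fun i => vv α i = gN),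
      ∀ i ∈ (Finset.Icc (1-N) (0:ℤ)).filter (fun i => vv α i = gN), i ≤ x :=
    ⟨_, Finset.max'_mem _ hT2, fun i hi => Finset.le_max' _ i hi⟩
  rw [Finset.mem_filter, Finset.mem_Icc] at hj₂mem
  obtain ⟨⟨hj₂N, hj₂0⟩, hj₂v⟩ := hj₂mem
  have hj₂max : ∀ i : ℤ, 1 - N ≤ i → i ≤ 0 → vv α i = gN → i ≤ j₂ := by
    intro i h1 h2 h3
    apply hj₂max'
    rw [Finset.mem_filter, Finset.mem_Icc]
    exact ⟨⟨h1, h2⟩, h3⟩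
  -- L1 : for 1 ≤ i < j₁, vv α i ≥ g1 + gN
  have L1 : ∀ i : ℤ, 1 ≤ i → i < j₁ → g1 + gN ≤ vv α i := by
    intro i hi1 hi2
    have hiN : i ≤ N - 1 := by omega
    have hgley : g1 ≤ vv α i := h1le i (by omega) (by omega)
    have hne : vv α i ≠ g1 := by
      intro h
      have := hj₁min i (by omega) hiN h
      omega
    have hstrict : g1 < vv α i := lt_of_le_of_ne hgley (Ne.symm hne)
    obtain ⟨ni, hni⟩ := vv_mem α i
    obtain ⟨n₁, hn₁⟩ := vv_mem α j₁
    have hdiff : vv α i - g1 = ((i - j₁ : ℤ) : ℝ) * α + ((ni - n₁ : ℤ) : ℝ) := by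
      rw [← hj₁v, hni, hn₁]; push_cast; ring
    have hv : vv α (i - j₁) ≤ vv α i - g1 := by
      apply vv_min' α (i - j₁) _ (by linarith) ⟨ni - n₁, hdiff⟩
    have hgN : gN ≤ vv α (i - j₁) := hNle (i - j₁) (by omega) (by omega)
    linarith
  -- L2 : for j₂ < i ≤ -1, vv α i ≥ g1 + gN
  have L2 : ∀ i : ℤ, i ≤ -1 → j₂ < i → g1 + gN ≤ vv α i := by
    intro i hi1 hi2
    have hgley : gN ≤ vv α i := hNle i (by omega) (by omega)
    have hne : vv α i ≠ gN := by
      intro h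
      have := hj₂max i (by omega) (by omega) h
      omega
    have hstrict : gN < vv α i := lt_of_le_of_ne hgley (Ne.symm hne)
    obtain ⟨ni, hni⟩ := vv_mem α i
    obtain ⟨n₂, hn₂⟩ := vv_mem α j₂
    have hdiff : vv α i - gN = ((i - j₂ : ℤ) : ℝ) * α + ((ni - n₂ : ℤ) : ℝ) := by
      rw [← hj₂v, hni, hn₂]; push_cast; ring
    have hv : vv α (i - j₂) ≤ vv α i - gN := by
      apply vv_min' α (i - j₂) _ (by linarith) ⟨ni - n₂, hdiff⟩
    have hg1 : g1 ≤ vv α (i - j₂) := h1le (i - j₂) (by omega) (by omega)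
    linarith
  -- main case analysis on the minimizer j
  rcases lt_trichotomy j 0 with hneg | hzero | hpos
  · -- j ≤ -1
    rcases le_or_gt j j₂ with hle | hgt
    · right; left
      have h1 : gN ≤ gap α N k := by
        rw [hgk]; exact hNle j (by omega) (by omega)
      have h2 : gap α N k ≤ gN := by
        rw [← hj₂v]; exact hkle j₂ (by omega) (by omega)
      linarith
    · right; right
      have hlow : g1 + gN ≤ gap α N k := by
        rw [hgk]; exact L2 j (by omega) hgt
      have hj₁out : N - k < j₁ := by
        by_contra h
        push_neg at h
        have := hkle j₁ (by omega) h
        rw [hj₁v] at this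
        linarith
      have hj₂out : j₂ ≤ -k := by
        by_contra h
        push_neg at h
        have := hkle j₂ (by omega) (by omega)
        rw [hj₂v] at this
        linarith
      have hin : gap α N k ≤ vv α (j₁ + j₂) := hkle _ (by omega) (by omega)
      obtain ⟨n₁, hn₁⟩ := vv_mem α j₁
      obtain ⟨n₂, hn₂⟩ := vv_mem α j₂
      have hsumrep : g1 + gN = ((j₁ + j₂ : ℤ) : ℝ) * α + ((n₁ + n₂ : ℤ) : ℝ) := by
        rw [← hj₁v, ← hj₂v, hn₁, hn₂]; push_cast; ring
      have hsum : vv α (j₁ + j₂) ≤ g1 + gN :=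
        vv_min' α (j₁ + j₂) _ (by linarith) ⟨n₁ + n₂, hsumrep⟩
      linarith
  · -- j = 0 : gap k = 1
    have hgk1 : gap α N k = 1 := by rw [hgk, hzero, vv_zero]
    rcases le_or_gt k (N-1) with hk' | hk'
    · left
      have h1 : gap α N k ≤ vv α 1 := hkle 1 (by omega) (by omega)
      have h2 : vv α 1 = 1 := le_antisymm (vv_le_one α 1) (by linarith [hgk1])
      have hall := vv_all_one α (vv_one_int α h2)
      rw [hgk1, ← hj₁v, hall j₁]
    · rcases eq_or_lt_of_le hk2 with hkN | _
      · have hN1 : N = 1 ∨ 2 ≤ N := by omega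
        rcases hN1 with hN1 | hN2
        · left
          have : k = 1 := by omega
          rw [this]
        · right; left
          have h1 : gap α N k ≤ vv α (-1) := hkle (-1) (by omega) (by omega)
          have h2 : vv α (-1) = 1 := le_antisymm (vv_le_one α (-1)) (by linarith [hgk1])
          have hall := vv_all_one α (vv_negone_int α h2)
          rw [hgk1, ← hj₂v, hall j₂]
      · omega
  · -- 1 ≤ j
    rcases le_or_gt j₁ j with hge | hlt
    · left
      have h1 : g1 ≤ gap α N k := by
        rw [hgk]; exact h1le j (by omega) (by omega)
      have h2 : gap α N k ≤ g1 := by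
        rw [← hj₁v]; exact hkle j₁ (by omega) (by omega)
      linarith
    · right; right
      have hlow : g1 + gN ≤ gap α N k := by
        rw [hgk]; exact L1 j (by omega) hlt
      have hj₁out : N - k < j₁ := by
        by_contra h
        push_neg at h
        have := hkle j₁ (by omega) h
        rw [hj₁v] at this
        linarith
      have hj₂out : j₂ ≤ -k := by
        by_contra h
        push_neg at h
        have := hkle j₂ (by omega) (by omega)
        rw [hj₂v] at this
        linarith
      have hin : gap α N k ≤ vv α (j₁ + j₂) := hkle _ (by omega) (by omega)
      obtain ⟨n₁, hn₁⟩ := vv_mem α j₁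
      obtain ⟨n₂, hn₂⟩ := vv_mem α j₂
      have hsumrep : g1 + gN = ((j₁ + j₂ : ℤ) : ℝ) * α + ((n₁ + n₂ : ℤ) : ℝ) := by
        rw [← hj₁v, ← hj₂v, hn₁, hn₂]; push_cast; ring
      have hsum : vv α (j₁ + j₂) ≤ g1 + gN :=
        vv_min' α (j₁ + j₂) _ (by linarith) ⟨n₁ + n₂, hsumrep⟩
      linarith


/-- If exactly three gap lengths occur, the largest is the sum of the other two. -/
theorem three_gap_sum (α : ℝ) (N : ℤ) (hN : 0 < N) :
    ∀ a b c : ℝ,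
      {s : ℝ | ∃ k : ℤ, 1 ≤ k ∧ k ≤ N ∧ s = gap α N k} = {a, b, c} →
      a < b → b < c → c = a + b := by
  intro a b c hset hab hbc
  have key : ∀ x : ℝ, x ∈ ({a, b, c} : Set ℝ) →
      x = gap α N 1 ∨ x = gap α N N ∨ x = gap α N 1 + gap α N N := by
    intro x hx
    rw [← hset] at hx
    obtain ⟨k, hk1, hk2, rfl⟩ := hx
    exact gap_trichotomy α N hN k hk1 hk2
  have ha := key a (by simp)
  have hb := key b (by simp)
  have hc := key c (by simp)
  have g1pos := gap_pos α N 1 le_rfl (by omega)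
  have gNpos := gap_pos α N N (by omega) le_rfl
  rcases ha with h | h | h <;> rcases hb with h' | h' | h' <;>
    rcases hc with h'' | h'' | h'' <;> linarith
end
end

section
/- Let α be irrational, N ≥ 1, and let s_{k,N} denote the gap from {kα} to its successor among {α}, ..., {Nα} on ℝ/ℤ. Then the set { s_{k,N} : 1 ≤ k ≤ N } has at most three elements. -/
open Matrix Set

noncomputable section

lemma tg_frac_le {v f : ℝ} (hv : 0 < v) (hf1 : f < 1) (m : ℤ) (h : v = f + m) : f ≤ v := by
  have hm : (0:ℤ) ≤ m := by
    by_contra h'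
    push_neg at h'
    have hm1 : m ≤ -1 := by omega
    have : (m:ℝ) ≤ -1 := by exact_mod_cast hm1
    linarith
  have : (0:ℝ) ≤ m := by exact_mod_cast hm
  linarith

lemma tg_eq_frac {v f : ℝ} (hv : 0 < v) (hv1 : v < 1) (hf0 : 0 ≤ f) (hf1 : f < 1)
    (m : ℤ) (h : v = f + m) : v = f := by
  have hm0 : m = 0 := by
    have h1 : (-1:ℝ) < m := by linarith
    have h2 : (m:ℝ) < 1 := by linarith
    have : (-1:ℤ) < m := by exact_mod_cast h1
    have : m < 1 := by exact_mod_cast h2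
    omega
  subst hm0; simpa using h

lemma tg_fract_pos {β : ℝ} (hβ : Irrational β) {j : ℤ} (hj : j ≠ 0) :
    0 < Int.fract ((j:ℝ) * β) := by
  rw [Int.fract_pos]
  intro h
  exact (hβ.intCast_mul hj).ne_int ⌊(j:ℝ) * β⌋ h

lemma tg_core (β : ℝ) (hβ : Irrational β) (N : ℤ) (d1 d2 : ℝ)
    (hd : d1 + d2 ≤ 1) (r : ℤ) (hr1 : 1 ≤ r) (hr2 : r ≤ N - 1)
    (hd2 : Int.fract (-((r:ℝ) * β)) = d2)
    (hd1min : ∀ j : ℤ, 1 ≤ j → j ≤ N - 1 → d1 ≤ Int.fract ((j:ℝ) * β))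
    (hd2min : ∀ j : ℤ, 1 ≤ j → j ≤ N - 1 → d2 ≤ Int.fract (-((j:ℝ) * β)))
    (m : ℤ) (hm1 : 1 ≤ m) (hmr : m < r)
    (v : ℝ) (hv : 0 < v) (n : ℤ) (heq : v = -((m:ℝ)) * β + n) :
    d1 + d2 ≤ v := by
  rcases le_or_gt 1 v with h1 | h1
  · linarith
  · -- v < 1, so v = fract(-(mβ))
    set f := Int.fract (-((m:ℝ) * β)) with hf
    have hfl : -((m:ℝ) * β) = f + ⌊-((m:ℝ) * β)⌋ := by
      rw [hf]; unfold Int.fract; ring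
    have hveq : v = f + ((⌊-((m:ℝ) * β)⌋ + n : ℤ) : ℝ) := by
      push_cast
      rw [heq]
      nlinarith [hfl]
    have hvf : v = f := tg_eq_frac hv h1 (Int.fract_nonneg _) (Int.fract_lt_one _) _ hveq
    have hvd2 : d2 ≤ v := by
      rw [hvf, hf]
      exact hd2min m hm1 (by omega)
    -- fract((r-m)β) = v - d2
    have hkey : ((r - m : ℤ) : ℝ) * β = (v - d2) + ((⌊-((m:ℝ) * β)⌋ - ⌊-((r:ℝ) * β)⌋ : ℤ) : ℝ) := by
      have hd2l : -((r:ℝ) * β) = d2 + ⌊-((r:ℝ) * β)⌋ := by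
        rw [← hd2]; unfold Int.fract; ring
      push_cast
      nlinarith [hfl, hd2l, hvf]
    have hne : v - d2 ≠ 0 := by
      intro h0
      have hrm : r - m ≠ 0 := by omega
      have : Irrational (((r - m : ℤ) : ℝ) * β) := hβ.intCast_mul hrm
      exact this.ne_int _ (by rw [hkey, h0, zero_add])
    have hfr : Int.fract (((r - m : ℤ) : ℝ) * β) = v - d2 := by
      rw [hkey, Int.fract_add_intCast]
      exact Int.fract_eq_self.mpr ⟨by linarith [lt_of_le_of_ne hvd2 (fun h => hne (by linarith))], by
        have : 0 ≤ d2 := by rw [← hd2]; exact Int.fract_nonneg _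
        linarith⟩
    have := hd1min (r - m) (by omega) (by omega)
    rw [hfr] at this
    linarith

lemma tg_gap_eq (α : ℝ) (N k : ℤ) (c : ℝ) (hmem : c ∈ gapSet α N k)
    (hlb : ∀ v ∈ gapSet α N k, c ≤ v) : gap α N k = c :=
  le_antisymm (csInf_le ⟨0, fun v hv => hv.1.le⟩ hmem) (le_csInf ⟨c, hmem⟩ hlb)

/-- Three gap theorem for irrational α, in terms of successor gaps. -/
theorem three_gap_irrational (α : ℝ) (hα : Irrational α) (N : ℤ) (hN : 1 ≤ N) :
    {s : ℝ | ∃ k : ℤ, 1 ≤ k ∧ k ≤ N ∧ s = gap α N k}.ncard ≤ 3 := by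
  rcases eq_or_lt_of_le hN with h1 | hN2
  · have hset : {s : ℝ | ∃ k : ℤ, 1 ≤ k ∧ k ≤ N ∧ s = gap α N k} = {gap α N 1} := by
      ext s
      simp only [Set.mem_setOf_eq, Set.mem_singleton_iff]
      constructor
      · rintro ⟨k, hk1, hk2, rfl⟩
        have hk : k = 1 := by omega
        rw [hk]
      · rintro rfl; exact ⟨1, le_refl _, hN, rfl⟩
    rw [hset, Set.ncard_singleton]; omega
  · set T : Finset ℤ := Finset.Icc 1 (N - 1) with hT
    have hTne : T.Nonempty := ⟨1, by rw [hT, Finset.mem_Icc]; omega⟩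
    obtain ⟨p, hpT, hp⟩ := T.exists_mem_eq_inf' hTne (fun j => Int.fract ((j : ℝ) * α))
    obtain ⟨q, hqT, hq⟩ := T.exists_mem_eq_inf' hTne (fun j => Int.fract (-((j : ℝ) * α)))
    set δp := Int.fract ((p : ℝ) * α) with hδp
    set δm := Int.fract (-((q : ℝ) * α)) with hδm
    have hpmem : 1 ≤ p ∧ p ≤ N - 1 := Finset.mem_Icc.mp (hT ▸ hpT)
    have hqmem : 1 ≤ q ∧ q ≤ N - 1 := Finset.mem_Icc.mp (hT ▸ hqT)
    have hd1min : ∀ j : ℤ, 1 ≤ j → j ≤ N - 1 → δp ≤ Int.fract ((j : ℝ) * α) := by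
      intro j hj1 hj2
      rw [← hp]
      exact Finset.inf'_le _ (by rw [hT, Finset.mem_Icc]; omega)
    have hd2min : ∀ j : ℤ, 1 ≤ j → j ≤ N - 1 → δm ≤ Int.fract (-((j : ℝ) * α)) := by
      intro j hj1 hj2
      rw [← hq]
      exact Finset.inf'_le _ (by rw [hT, Finset.mem_Icc]; omega)
    have hδp_pos : 0 < δp := tg_fract_pos hα (by omega : p ≠ 0)
    have hδm_pos : 0 < δm := by
      have hc : -((q : ℝ) * α) = ((-q : ℤ) : ℝ) * α := by push_cast; ring
      rw [hδm, hc]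
      exact tg_fract_pos hα (by omega : -q ≠ 0)
    have hδp_lt1 : δp < 1 := Int.fract_lt_one _
    have hδm_lt1 : δm < 1 := Int.fract_lt_one _
    have hsum : δp + δm ≤ 1 := by
      have h1 : δp ≤ Int.fract ((q : ℝ) * α) := hd1min q hqmem.1 hqmem.2
      have h2 : Int.fract (-((q : ℝ) * α)) = 1 - Int.fract ((q : ℝ) * α) :=
        Int.fract_neg (ne_of_gt (tg_fract_pos hα (by omega : q ≠ 0)))
      rw [hδm, h2]; linarith
    -- per-k values
    have hkey : ∀ k : ℤ, 1 ≤ k → k ≤ N → gap α N k ∈ ({δp, δm, δp + δm} : Set ℝ) := by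
      intro k hk1 hk2
      have hanal : ∀ v ∈ gapSet α N k, ∃ j n : ℤ, 1 - k ≤ j ∧ j ≤ N - k ∧
          v = (j : ℝ) * α + n ∧ 0 < v := by
        rintro v ⟨hv, l, n, hl1, hl2, rfl⟩
        exact ⟨l - k, n, by omega, by omega, by push_cast; ring, hv⟩
      have hposb : ∀ (j n : ℤ) (v : ℝ), 1 ≤ j → j ≤ N - 1 → 0 < v →
          v = (j : ℝ) * α + n → δp ≤ v := by
        intro j n v hj1 hj2 hv heq
        have hle := hd1min j hj1 hj2
        have hrep : v = Int.fract ((j : ℝ) * α) + ((⌊(j : ℝ) * α⌋ + n : ℤ) : ℝ) := by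
          rw [heq]; unfold Int.fract; push_cast; ring
        exact le_trans hle (tg_frac_le hv (Int.fract_lt_one _) _ hrep)
      have hnegb : ∀ (j n : ℤ) (v : ℝ), 1 ≤ j → j ≤ N - 1 → 0 < v →
          v = -(j : ℝ) * α + n → δm ≤ v := by
        intro j n v hj1 hj2 hv heq
        have hle := hd2min j hj1 hj2
        have hrep : v = Int.fract (-((j : ℝ) * α)) + ((⌊-((j : ℝ) * α)⌋ + n : ℤ) : ℝ) := by
          rw [heq]; unfold Int.fract; push_cast; ring
        exact le_trans hle (tg_frac_le hv (Int.fract_lt_one _) _ hrep)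
      -- strong bounds
      have hnegs : ∀ (j n : ℤ) (v : ℝ), 1 ≤ j → j < q → 0 < v →
          v = -(j : ℝ) * α + n → δp + δm ≤ v := by
        intro j n v hj1 hjq hv heq
        exact tg_core α hα N δp δm hsum q hqmem.1 hqmem.2 hδm.symm hd1min hd2min
          j hj1 hjq v hv n heq
      have hposs : ∀ (j n : ℤ) (v : ℝ), 1 ≤ j → j < p → 0 < v →
          v = (j : ℝ) * α + n → δp + δm ≤ v := by
        intro j n v hj1 hjp hv heq
        have hres := tg_core (-α) hα.neg N δm δp (by linarith) p hpmem.1 hpmem.2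
          (by rw [hδp]; ring_nf)
          (fun i hi1 hi2 => by
            have hc : (i : ℝ) * (-α) = -((i : ℝ) * α) := by ring
            rw [hc]; exact hd2min i hi1 hi2)
          (fun i hi1 hi2 => by
            have hc : -((i : ℝ) * (-α)) = (i : ℝ) * α := by ring
            rw [hc]; exact hd1min i hi1 hi2)
          j hj1 hjp v hv n (by rw [heq]; ring)
        linarith
      have hLB : ∀ c : ℝ, c ≤ 1 →
          (∀ (j n : ℤ) (v : ℝ), 1 ≤ j → j ≤ N - k → 0 < v → v = (j : ℝ) * α + n → c ≤ v) →
          (∀ (j n : ℤ) (v : ℝ), 1 ≤ j → j ≤ k - 1 → 0 < v → v = -(j : ℝ) * α + n → c ≤ v) →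
          ∀ v ∈ gapSet α N k, c ≤ v := by
        intro c hc1 hpos hneg v hv
        obtain ⟨j, n, hj1, hj2, heq, hv0⟩ := hanal v hv
        rcases lt_trichotomy j 0 with h | h | h
        · exact hneg (-j) n v (by omega) (by omega) hv0 (by rw [heq]; push_cast; ring)
        · subst h
          have hvn : v = (n : ℝ) := by rw [heq]; push_cast; ring
          have hn1 : 1 ≤ n := by
            have : (0 : ℝ) < n := by rw [← hvn]; exact hv0
            exact_mod_cast this
          have : (1 : ℝ) ≤ n := by exact_mod_cast hn1
          linarith [hvn ▸ this]
        · exact hpos j n v (by omega) (by omega) hv0 heq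
      -- membership candidates
      have hmem_p : k + p ≤ N → δp ∈ gapSet α N k := by
        intro h
        exact ⟨hδp_pos, k + p, -⌊(p : ℝ) * α⌋, by omega, by omega,
          by rw [hδp]; unfold Int.fract; push_cast; ring⟩
      have hmem_q : q + 1 ≤ k → δm ∈ gapSet α N k := by
        intro h
        exact ⟨hδm_pos, k - q, -⌊-((q : ℝ) * α)⌋, by omega, by omega,
          by rw [hδm]; unfold Int.fract; push_cast; ring⟩
      have hmem_pq : N < k + p → k ≤ q → δp + δm ∈ gapSet α N k := by
        intro h1 h2
        exact ⟨by linarith, k + p - q, -⌊(p : ℝ) * α⌋ - ⌊-((q : ℝ) * α)⌋,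
          by omega, by omega,
          by rw [hδp, hδm]; unfold Int.fract; push_cast; ring⟩
      rcases le_or_gt (k + p) N with hkp | hkp <;> rcases le_or_gt (q + 1) k with hkq | hkq
      · -- gap = min δp δm
        have hg : gap α N k = min δp δm := by
          apply tg_gap_eq
          · rcases le_total δp δm with h | h
            · rw [min_eq_left h]; exact hmem_p hkp
            · rw [min_eq_right h]; exact hmem_q hkq
          · refine hLB _ (by rcases le_total δp δm with h | h <;>
              [rw [min_eq_left h]; rw [min_eq_right h]] <;> linarith) ?_ ?_
            · intro j n v hj1 hj2 hv heq
              exact le_trans (min_le_left _ _) (hposb j n v hj1 (by omega) hv heq)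
            · intro j n v hj1 hj2 hv heq
              exact le_trans (min_le_right _ _) (hnegb j n v hj1 (by omega) hv heq)
        rw [hg]
        rcases le_total δp δm with h | h
        · rw [min_eq_left h]; exact Or.inl rfl
        · rw [min_eq_right h]; exact Or.inr (Or.inl rfl)
      · -- gap = δp
        have hg : gap α N k = δp := by
          apply tg_gap_eq
          · exact hmem_p hkp
          · refine hLB _ (by linarith) ?_ ?_
            · intro j n v hj1 hj2 hv heq
              exact hposb j n v hj1 (by omega) hv heq
            · intro j n v hj1 hj2 hv heq
              have := hnegs j n v hj1 (by omega) hv heq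
              linarith
        rw [hg]; exact Or.inl rfl
      · -- gap = δm
        have hg : gap α N k = δm := by
          apply tg_gap_eq
          · exact hmem_q hkq
          · refine hLB _ (by linarith) ?_ ?_
            · intro j n v hj1 hj2 hv heq
              have := hposs j n v hj1 (by omega) hv heq
              linarith
            · intro j n v hj1 hj2 hv heq
              exact hnegb j n v hj1 (by omega) hv heq
        rw [hg]; exact Or.inr (Or.inl rfl)
      · -- gap = δp + δm
        have hg : gap α N k = δp + δm := by
          apply tg_gap_eq
          · exact hmem_pq hkp (by omega)
          · refine hLB _ hsum ?_ ?_
            · intro j n v hj1 hj2 hv heq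
              exact hposs j n v hj1 (by omega) hv heq
            · intro j n v hj1 hj2 hv heq
              exact hnegs j n v hj1 (by omega) hv heq
        rw [hg]; exact Or.inr (Or.inr rfl)
    have hsub : {s : ℝ | ∃ k : ℤ, 1 ≤ k ∧ k ≤ N ∧ s = gap α N k} ⊆
        ({δp, δm, δp + δm} : Set ℝ) := by
      rintro s ⟨k, hk1, hk2, rfl⟩
      exact hkey k hk1 hk2
    have h3 : ({δp, δm, δp + δm} : Set ℝ).ncard ≤ 3 := by
      have t1 := Set.ncard_insert_le δp ({δm, δp + δm} : Set ℝ)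
      have t2 := Set.ncard_insert_le δm ({δp + δm} : Set ℝ)
      have t3 : ({δp + δm} : Set ℝ).ncard = 1 := Set.ncard_singleton _
      omega
    exact le_trans (Set.ncard_le_ncard hsub (Set.toFinite _)) h3
end
end
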